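/- arXiv:1007.1694 — 2 statements merged into one kernel-verified Lean document; each statement's English description precedes it below -/
import Mathlib

section
/- Let Γ be a consistent counter machine with m states, let (i⁰,C⁰₁,C⁰₂) be an initial configuration with trajectory (i^t,C^t₁,C^t₂), t ∈ ℕ, and consider the associated Skorokhod data (θ, R) of dimension d = 5m+9 with x(t) = z^{i⁰,C⁰₁,C⁰₂} + θt. Then every Skorokhod solution (y,z) satisfies z(5t) = z^{i^t,C^t₁,C^t₂} for every t ∈ ℕ; in particular the B- and C-coordinates of z(5t) encode the state and the counter values of the counter machine at time t. -/
open scoped BigOperators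

/-- A Skorokhod solution for the matrix `R` and input path `x`:
continuous `y, z` on `[0,∞)` with `z = x + R y`, `z ≥ 0`, `y 0 = 0`,
each `y j` nondecreasing, and `y j` does not increase while `z j > 0`
(the Lebesgue–Stieltjes measure of `y j` vanishes on `{s | z s j > 0}`). -/
def IsSkorokhodSolution {n : Type*} [Fintype n] (R : Matrix n n ℝ)
    (x y z : ℝ → n → ℝ) : Prop :=
  ContinuousOn y (Set.Ici 0) ∧
  ContinuousOn z (Set.Ici 0) ∧
  (∀ t : ℝ, 0 ≤ t → z t = x t + R.mulVec (y t)) ∧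
  (∀ t : ℝ, 0 ≤ t → ∀ j, 0 ≤ z t j) ∧
  (y 0 = 0) ∧
  (∀ j, MonotoneOn (fun t => y t j) (Set.Ici 0)) ∧
  (∀ j, ∀ s₁ s₂ : ℝ, 0 ≤ s₁ → s₁ ≤ s₂ →
      (∀ s ∈ Set.Ioo s₁ s₂, 0 < z s j) → y s₂ j = y s₁ j)

/-- `R` is an S-matrix: some nonnegative `w` with `R w > 0` componentwise. -/
def IsSMatrix {n : Type*} [Fintype n] (R : Matrix n n ℝ) : Prop :=
  ∃ w : n → ℝ, (∀ i, 0 ≤ w i) ∧ (∀ i, 0 < R.mulVec w i)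

/-- `R` is completely-S: every (nonempty) principal submatrix is an S-matrix. -/
def IsCompletelyS {n : Type*} [Fintype n] [DecidableEq n] (R : Matrix n n ℝ) : Prop :=
  ∀ I : Finset n, I.Nonempty →
    IsSMatrix (R.submatrix (fun a : I => (a : n)) (fun a : I => (a : n)))

/-- Stability of the fluid model `(z₀, θ, R)`: every Skorokhod solution for
`x t = z₀ + θ t` satisfies `z t → 0` as `t → ∞`. -/
def FluidStable {n : Type*} [Fintype n] (z0 θv : n → ℝ) (R : Matrix n n ℝ) : Prop :=
  ∀ y z : ℝ → n → ℝ,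
    IsSkorokhodSolution R (fun t i => z0 i + θv i * t) y z →
    Filter.Tendsto z Filter.atTop (nhds 0)

/-- `f` is active at rate `r` on `(s₁, s₂)`. -/
def ActiveAtRate (f : ℝ → ℝ) (r s₁ s₂ : ℝ) : Prop :=
  ∀ s ∈ Set.Ioo s₁ s₂, f s - f s₁ = r * (s - s₁)

/-- `f` is active at unit rate on `(s₁, s₂)`. -/
def UnitActive (f : ℝ → ℝ) (s₁ s₂ : ℝ) : Prop := ActiveAtRate f 1 s₁ s₂

/-- `f` is passive (constant) on `(s₁, s₂)`. -/
def Passive (f : ℝ → ℝ) (s₁ s₂ : ℝ) : Prop := ∀ s ∈ Set.Ioo s₁ s₂, f s = f s₁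

/-- A counter machine with `m` states: update map with moves in
`{(-1,0),(0,-1),(0,0),(1,0),(0,1)}`, never decrementing a zero counter. -/
structure CounterMachine (m : ℕ) where
  Γ : Fin m → Bool → Bool → Fin m × ℤ × ℤ
  moves : ∀ i b c, ((Γ i b c).2.1, (Γ i b c).2.2) ∈
      ({(-1,0), (0,-1), (0,0), (1,0), (0,1)} : Set (ℤ × ℤ))
  consistent : ∀ i b c, (b = false → 0 ≤ (Γ i b c).2.1) ∧ (c = false → 0 ≤ (Γ i b c).2.2)

/-- One step of the counter machine on a configuration. -/
def CounterMachine.step {m : ℕ} (M : CounterMachine m) :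
    Fin m × ℕ × ℕ → Fin m × ℕ × ℕ := fun cfg =>
  let r := M.Γ cfg.1 (decide (0 < cfg.2.1)) (decide (0 < cfg.2.2))
  (r.1, ((cfg.2.1 : ℤ) + r.2.1).toNat, ((cfg.2.2 : ℤ) + r.2.2).toNat)

/-- Index set of the associated Skorokhod problem: groups A (5), B (m), C (2),
D (2), E (4m), F (4m); total dimension 5m + 9. -/
inductive Idx (m : ℕ) where
  | A : Fin 5 → Idx m
  | B : Fin m → Idx m
  | C : Fin 2 → Idx m
  | D : Fin 2 → Idx m
  | E : Fin m → Bool → Bool → Idx m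
  | F : Fin m → Bool → Bool → Idx m
  deriving DecidableEq, Fintype

/-- Numeric value of a bit. -/
def bnum (b : Bool) : ℝ := if b then 1 else 0

/-- Real indicator of a decidable proposition. -/
def indC (P : Prop) [Decidable P] : ℝ := if P then 1 else 0

/-- The 5×5 block AA. -/
def AAmat : Matrix (Fin 5) (Fin 5) ℝ :=
  !![1,2,1,1,0; 0,1,2,1,1; 1,0,1,2,1; 1,1,0,1,2; 2,1,1,0,1]

/-- The reflection matrix `R` associated with the counter machine `M`. -/
def Rmat {m : ℕ} (M : CounterMachine m) : Matrix (Idx m) (Idx m) ℝ :=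
  fun p q => match p, q with
  | .A k, .A l => AAmat k l
  | .B _, .A l => if l = 0 then -1 else 0
  | .B j, .B j' => if j' = j then 1 else 0
  | .B j, .E i b c => if (M.Γ i b c).1 = j then 0 else 1
  | .C _, .A l => if l = 0 ∨ l = 3 then -1 else 0
  | .C k, .C k' => if k' = k then 1 else 0
  | .C k, .D k' => if k' = k then 1 else 0
  | .C k, .E i b c =>
      (if k = 0 then ((M.Γ i b c).2.1 : ℝ) else ((M.Γ i b c).2.2 : ℝ)) + 1
  | .D _, .A l => if l = 1 then -1 else 0
  | .D k, .C k' => if k' = k then 1 else 0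
  | .D k, .D k' => if k' = k then 1 else 0
  | .E _ b c, .A l => if l = 0 then -(bnum b) - bnum c else if l = 2 then -1 else 0
  | .E i _ _, .B j => if j = i then -1 else 0
  | .E _ b c, .C k => if k = 0 then 2 * bnum b - 1 else 2 * bnum c - 1
  | .E i b c, .E i' b' c' => if i' = i ∧ b' = b ∧ c' = c then 1 else 0
  | .E i b c, .F i' b' c' => if i' = i ∧ b' = b ∧ c' = c then 1 else 0
  | .F _ b c, .A l => if l = 0 then -(bnum b) - bnum c
      else if l = 2 then -1 else if l = 3 then -4 else if l = 4 then 4 else 0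
  | .F i _ _, .B j => if j = i then -1 else 0
  | .F _ b c, .C k => if k = 0 then 2 * bnum b - 1 else 2 * bnum c - 1
  | .F i b c, .E i' b' c' => if i' = i ∧ b' = b ∧ c' = c then 1 else 0
  | .F i b c, .F i' b' c' => if i' = i ∧ b' = b ∧ c' = c then 1 else 0
  | _, _ => 0

/-- The modified reflection matrix `R*` with halting state `i*`. -/
def RmatStar {m : ℕ} (M : CounterMachine m) (istar : Fin m) :
    Matrix (Idx m) (Idx m) ℝ :=
  fun p q => match p, q with
  | .A k, .B j => if j = istar ∧ (k = 2 ∨ k = 3 ∨ k = 4) then -1 else 0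
  | .E i b c, .B j =>
      if j = istar then -3 + bnum b + bnum c else if j = i then -1 else 0
  | .F i b c, .B j =>
      if j = istar then -4 + bnum b + bnum c else if j = i then -1 else 0
  | p, q => Rmat M p q

/-- The drift vector θ: −1 on the A-coordinates and 0 elsewhere. -/
def thetaVec (m : ℕ) : Idx m → ℝ := fun p => match p with
  | .A _ => -1
  | _ => 0

/-- The encoding `z^{i,C₁,C₂}` of a configuration as a state of the
Skorokhod problem. -/
def encCfg {m : ℕ} (i : Fin m) (C₁ C₂ : ℕ) : Idx m → ℝ := fun p => match p with
  | .A k => if k = 0 ∨ k = 4 then 0 else 1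
  | .B j => if j = i then 0 else 1
  | .C k => if k = 0 then (C₁ : ℝ) else (C₂ : ℝ)
  | .D _ => 0
  | .E _ _ _ => 3
  | .F _ _ _ => 4

/-- The linear input path `x t = z^{i,C₁,C₂} + θ t`. -/
def fluidX {m : ℕ} (i : Fin m) (C₁ C₂ : ℕ) : ℝ → Idx m → ℝ :=
  fun t p => encCfg i C₁ C₂ p + thetaVec m p * t

/-- The quantity Υ(i′,b,c) of the paper (for current configuration (i,C₁,C₂)). -/
def Upsilon {m : ℕ} (i : Fin m) (C₁ C₂ : ℕ) (i' : Fin m) (b c : Bool) : ℝ :=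
  -(bnum b) - bnum c + (2 * bnum b - 1) * indC (C₁ = 0)
    + (2 * bnum c - 1) * indC (C₂ = 0) - indC (i' = i)

section KeyUB
open Set
/-- Core upper-bound lemma for one coordinate of a Skorokhod solution. -/
lemma key_ub (f g : ℝ → ℝ) (a b v K : ℝ) (h0a : 0 ≤ a) (hv : 0 ≤ v) (hK : 0 ≤ K)
    (hmono : MonotoneOn f (Icc a b)) (hcont : ContinuousOn f (Icc a b))
    (hcomp : ∀ s₁ s₂ : ℝ, a ≤ s₁ → s₁ ≤ s₂ → s₂ ≤ b →
      (∀ s ∈ Ioo s₁ s₂, 0 < g s) → f s₂ = f s₁)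
    (hlb : ∀ s ∈ Icc a b, v - K * (s - a) + (f s - f a) ≤ g s) :
    ∀ s ∈ Icc a b, f s - f a ≤ max 0 (K * (s - a) - v) := by
  intro s₀ hs₀
  by_contra hcon
  push_neg at hcon
  set L : ℝ → ℝ := fun s => max 0 (K * (s - a) - v) with hL
  have hLmono : Monotone L := by
    intro u w huw
    exact max_le_max le_rfl (by nlinarith)
  set U : Set ℝ := Icc a s₀ ∩ (fun s => f s - f a - L s) ⁻¹' (Iic 0) with hU
  have haU : a ∈ U := by
    constructor
    · exact ⟨le_refl a, hs₀.1⟩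
    · simp [L, hv, sub_nonpos]
  have hIccsub : Icc a s₀ ⊆ Icc a b := Icc_subset_Icc le_rfl hs₀.2
  have hUclosed : IsClosed U := by
    apply ContinuousOn.preimage_isClosed_of_isClosed _ isClosed_Icc isClosed_Iic
    apply ContinuousOn.sub
    · exact ContinuousOn.sub (hcont.mono hIccsub) continuousOn_const
    · apply Continuous.continuousOn
      exact continuous_const.max (by continuity)
  have hUbdd : BddAbove U := ⟨s₀, fun u hu => hu.1.2⟩
  have hUne : U.Nonempty := ⟨a, haU⟩
  set u := sSup U with hu
  have huU : u ∈ U := hUclosed.csSup_mem hUne hUbdd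
  have hau : a ≤ u := le_csSup hUbdd haU
  have hus₀ : u ≤ s₀ := csSup_le hUne (fun w hw => hw.1.2)
  have hfu : f u - f a ≤ L u := by
    simpa [sub_nonpos] using huU.2
  have hne : u ≠ s₀ := fun he => absurd (he ▸ hfu) (not_le.mpr hcon)
  have hults₀ : u < s₀ := lt_of_le_of_ne hus₀ hne
  have hpos : ∀ s ∈ Ioo u s₀, 0 < g s := by
    intro s hs
    have hsI : s ∈ Icc a s₀ := ⟨hau.trans hs.1.le, hs.2.le⟩
    have hnotU : s ∉ U := fun hsU => absurd (le_csSup hUbdd hsU) (not_le.mpr hs.1)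
    have : 0 < f s - f a - L s := by
      by_contra hc
      exact hnotU ⟨hsI, by simpa [sub_nonpos] using not_lt.mp hc⟩
    have hlbs := hlb s (hIccsub hsI)
    have : v - K * (s - a) + L s < v - K * (s - a) + (f s - f a) := by linarith
    have h0 : (0:ℝ) ≤ v - K * (s - a) + L s := by
      rcases le_or_gt (K * (s - a) - v) 0 with hle | hlt
      · simp [L, max_eq_left hle]; linarith
      · simp [L, max_eq_right hlt.le]
    linarith
  have := hcomp u s₀ hau hus₀ hs₀.2 hpos
  have : f s₀ - f a ≤ L u := by rw [this]; exact hfu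
  exact absurd (this.trans (hLmono hults₀.le)) (not_le.mpr hcon)

end KeyUB
section Infra
open Set Finset
variable {m : ℕ}

def idxEquiv (m : ℕ) :
    (Fin 5 ⊕ Fin m ⊕ Fin 2 ⊕ Fin 2 ⊕ (Fin m × Bool × Bool) ⊕ (Fin m × Bool × Bool)) ≃ Idx m where
  toFun q := match q with
    | .inl k => .A k
    | .inr (.inl j) => .B j
    | .inr (.inr (.inl k)) => .C k
    | .inr (.inr (.inr (.inl k))) => .D k
    | .inr (.inr (.inr (.inr (.inl ⟨i,b,c⟩)))) => .E i b c
    | .inr (.inr (.inr (.inr (.inr ⟨i,b,c⟩)))) => .F i b c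
  invFun p := match p with
    | .A k => .inl k
    | .B j => .inr (.inl j)
    | .C k => .inr (.inr (.inl k))
    | .D k => .inr (.inr (.inr (.inl k)))
    | .E i b c => .inr (.inr (.inr (.inr (.inl ⟨i,b,c⟩))))
    | .F i b c => .inr (.inr (.inr (.inr (.inr ⟨i,b,c⟩))))
  left_inv q := by rcases q with k | j | k | k | ⟨i,b,c⟩ | ⟨i,b,c⟩ <;> rfl
  right_inv p := by cases p <;> rfl

lemma sum_idx (g : Idx m → ℝ) :
    ∑ q : Idx m, g q =
      (∑ k : Fin 5, g (.A k)) + (∑ j : Fin m, g (.B j)) + (∑ k : Fin 2, g (.C k))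
      + (∑ k : Fin 2, g (.D k))
      + (∑ i : Fin m, ∑ b : Bool, ∑ c : Bool, g (.E i b c))
      + (∑ i : Fin m, ∑ b : Bool, ∑ c : Bool, g (.F i b c)) := by
  rw [← Fintype.sum_equiv (idxEquiv m) (fun q => g (idxEquiv m q)) g (fun q => rfl)]
  simp [Fintype.sum_sum_type, Fintype.sum_prod_type, idxEquiv, add_assoc]

lemma sum_fin_ite (i : Fin m) (c : ℝ) (v : Fin m → ℝ) :
    (∑ j : Fin m, (if j = i then c else 0) * v j) = c * v i := by
  rw [Finset.sum_eq_single i] <;> simp +contextual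

lemma sum3_ite (i : Fin m) (b c : Bool) (w : Fin m → Bool → Bool → ℝ) :
    (∑ i' : Fin m, ∑ b' : Bool, ∑ c' : Bool,
      (if i' = i ∧ b' = b ∧ c' = c then (1:ℝ) else 0) * w i' b' c') = w i b c := by
  have : ∀ i' : Fin m, (∑ b' : Bool, ∑ c' : Bool,
      (if i' = i ∧ b' = b ∧ c' = c then (1:ℝ) else 0) * w i' b' c')
      = (if i' = i then (1:ℝ) else 0) * w i' b c := by
    intro i'
    by_cases h : i' = i <;> cases b <;> cases c <;> simp [h]
  rw [Finset.sum_congr rfl (fun i' _ => this i'), sum_fin_ite]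
  simp

end Infra
section Rows
open Set Finset
variable {m : ℕ} (M : CounterMachine m) (v : Idx m → ℝ)

lemma row_A (k : Fin 5) :
    (Rmat M).mulVec v (.A k) = ∑ l : Fin 5, AAmat k l * v (.A l) := by
  show (∑ q : Idx m, Rmat M (.A k) q * v q) = _
  rw [sum_idx]
  have h1 : ∀ j : Fin m, Rmat M (.A k) (.B j) * v (.B j) = 0 := fun j => by
    show (0:ℝ) * _ = 0; ring
  simp only [show ∀ l, Rmat M (.A k) (.A l) = AAmat k l from fun l => rfl]
  have hz : ∀ (w : Idx m → ℝ) (p : Idx m → Prop), True := fun _ _ => trivial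
  norm_num [show ∀ j, Rmat M (.A k) (.B j) = 0 from fun _ => rfl,
    show ∀ j, Rmat M (.A k) (.C j) = 0 from fun _ => rfl,
    show ∀ j, Rmat M (.A k) (.D j) = 0 from fun _ => rfl,
    show ∀ i b c, Rmat M (.A k) (.E i b c) = 0 from fun _ _ _ => rfl,
    show ∀ i b c, Rmat M (.A k) (.F i b c) = 0 from fun _ _ _ => rfl]

lemma row_B (j : Fin m) :
    (Rmat M).mulVec v (.B j) = -(v (.A 0)) + v (.B j)
      + ∑ i : Fin m, ∑ b : Bool, ∑ c : Bool,
          (if (M.Γ i b c).1 = j then 0 else 1) * v (.E i b c) := by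
  show (∑ q : Idx m, Rmat M (.B j) q * v q) = _
  rw [sum_idx]
  rw [show (∑ l : Fin 5, Rmat M (.B j) (.A l) * v (.A l))
      = ∑ l : Fin 5, (if l = 0 then (-1:ℝ) else 0) * v (.A l) from rfl]
  rw [show (∑ j' : Fin m, Rmat M (.B j) (.B j') * v (.B j'))
      = ∑ j' : Fin m, (if j' = j then (1:ℝ) else 0) * v (.B j') from rfl,
    sum_fin_ite]
  norm_num [Fin.sum_univ_five,
    show ∀ k, Rmat M (.B j) (.C k) = 0 from fun _ => rfl,
    show ∀ k, Rmat M (.B j) (.D k) = 0 from fun _ => rfl,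
    show ∀ i b c, Rmat M (.B j) (.E i b c) = (if (M.Γ i b c).1 = j then 0 else 1) from
      fun _ _ _ => rfl,
    show ∀ i b c, Rmat M (.B j) (.F i b c) = 0 from fun _ _ _ => rfl]
  try ring

lemma row_C (k : Fin 2) :
    (Rmat M).mulVec v (.C k) = -(v (.A 0)) - v (.A 3) + v (.C k) + v (.D k)
      + ∑ i : Fin m, ∑ b : Bool, ∑ c : Bool,
          ((if k = 0 then ((M.Γ i b c).2.1 : ℝ) else ((M.Γ i b c).2.2 : ℝ)) + 1) * v (.E i b c) := by
  show (∑ q : Idx m, Rmat M (.C k) q * v q) = _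
  rw [sum_idx]
  rw [show (∑ l : Fin 5, Rmat M (.C k) (.A l) * v (.A l))
      = ∑ l : Fin 5, (if l = 0 ∨ l = 3 then (-1:ℝ) else 0) * v (.A l) from rfl]
  rw [show (∑ k' : Fin 2, Rmat M (.C k) (.C k') * v (.C k'))
      = ∑ k' : Fin 2, (if k' = k then (1:ℝ) else 0) * v (.C k') from rfl]
  rw [show (∑ k' : Fin 2, Rmat M (.C k) (.D k') * v (.D k'))
      = ∑ k' : Fin 2, (if k' = k then (1:ℝ) else 0) * v (.D k') from rfl]
  have h2 : ∀ (w : Fin 2 → ℝ), (∑ k' : Fin 2, (if k' = k then (1:ℝ) else 0) * w k') = w k := by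
    intro w
    fin_cases k <;> simp [Fin.sum_univ_two]
  rw [h2, h2]
  norm_num [Fin.sum_univ_five,
    show ∀ j, Rmat M (.C k) (.B j) = 0 from fun _ => rfl,
    show ∀ i b c, Rmat M (.C k) (.E i b c)
      = ((if k = 0 then ((M.Γ i b c).2.1 : ℝ) else ((M.Γ i b c).2.2 : ℝ)) + 1) from fun _ _ _ => rfl,
    show ∀ i b c, Rmat M (.C k) (.F i b c) = 0 from fun _ _ _ => rfl]
  try fin_cases k <;> simp +decide <;> try ring

lemma row_D (k : Fin 2) :
    (Rmat M).mulVec v (.D k) = -(v (.A 1)) + v (.C k) + v (.D k) := by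
  show (∑ q : Idx m, Rmat M (.D k) q * v q) = _
  rw [sum_idx]
  rw [show (∑ l : Fin 5, Rmat M (.D k) (.A l) * v (.A l))
      = ∑ l : Fin 5, (if l = 1 then (-1:ℝ) else 0) * v (.A l) from rfl]
  rw [show (∑ k' : Fin 2, Rmat M (.D k) (.C k') * v (.C k'))
      = ∑ k' : Fin 2, (if k' = k then (1:ℝ) else 0) * v (.C k') from rfl]
  rw [show (∑ k' : Fin 2, Rmat M (.D k) (.D k') * v (.D k'))
      = ∑ k' : Fin 2, (if k' = k then (1:ℝ) else 0) * v (.D k') from rfl]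
  have h2 : ∀ (w : Fin 2 → ℝ), (∑ k' : Fin 2, (if k' = k then (1:ℝ) else 0) * w k') = w k := by
    intro w
    fin_cases k <;> simp [Fin.sum_univ_two]
  rw [h2, h2]
  norm_num [Fin.sum_univ_five,
    show ∀ j, Rmat M (.D k) (.B j) = 0 from fun _ => rfl,
    show ∀ i b c, Rmat M (.D k) (.E i b c) = 0 from fun _ _ _ => rfl,
    show ∀ i b c, Rmat M (.D k) (.F i b c) = 0 from fun _ _ _ => rfl]
  try ring

lemma row_E (i : Fin m) (b c : Bool) :
    (Rmat M).mulVec v (.E i b c) = (-(bnum b) - bnum c) * v (.A 0) - v (.A 2) - v (.B i)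
      + (2 * bnum b - 1) * v (.C 0) + (2 * bnum c - 1) * v (.C 1)
      + v (.E i b c) + v (.F i b c) := by
  show (∑ q : Idx m, Rmat M (.E i b c) q * v q) = _
  rw [sum_idx]
  rw [show (∑ l : Fin 5, Rmat M (.E i b c) (.A l) * v (.A l))
      = ∑ l : Fin 5, (if l = 0 then -(bnum b) - bnum c else if l = 2 then (-1:ℝ) else 0) * v (.A l) from rfl]
  rw [show (∑ j : Fin m, Rmat M (.E i b c) (.B j) * v (.B j))
      = ∑ j : Fin m, (if j = i then (-1:ℝ) else 0) * v (.B j) from rfl, sum_fin_ite]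
  rw [show (∑ k : Fin 2, Rmat M (.E i b c) (.C k) * v (.C k))
      = ∑ k : Fin 2, (if k = 0 then 2 * bnum b - 1 else 2 * bnum c - 1) * v (.C k) from rfl]
  rw [show (∑ i' : Fin m, ∑ b' : Bool, ∑ c' : Bool, Rmat M (.E i b c) (.E i' b' c') * v (.E i' b' c'))
      = ∑ i' : Fin m, ∑ b' : Bool, ∑ c' : Bool,
          (if i' = i ∧ b' = b ∧ c' = c then (1:ℝ) else 0) * v (.E i' b' c') from rfl, sum3_ite]
  rw [show (∑ i' : Fin m, ∑ b' : Bool, ∑ c' : Bool, Rmat M (.E i b c) (.F i' b' c') * v (.F i' b' c'))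
      = ∑ i' : Fin m, ∑ b' : Bool, ∑ c' : Bool,
          (if i' = i ∧ b' = b ∧ c' = c then (1:ℝ) else 0) * v (.F i' b' c') from rfl, sum3_ite]
  simp +decide [Fin.sum_univ_five, Fin.sum_univ_two,
    show ∀ k, Rmat M (.E i b c) (.D k) = 0 from fun _ => rfl]
  try ring

lemma row_F (i : Fin m) (b c : Bool) :
    (Rmat M).mulVec v (.F i b c) = (-(bnum b) - bnum c) * v (.A 0) - v (.A 2)
      - 4 * v (.A 3) + 4 * v (.A 4) - v (.B i)
      + (2 * bnum b - 1) * v (.C 0) + (2 * bnum c - 1) * v (.C 1)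
      + v (.E i b c) + v (.F i b c) := by
  show (∑ q : Idx m, Rmat M (.F i b c) q * v q) = _
  rw [sum_idx]
  rw [show (∑ l : Fin 5, Rmat M (.F i b c) (.A l) * v (.A l))
      = ∑ l : Fin 5, (if l = 0 then -(bnum b) - bnum c else if l = 2 then (-1:ℝ)
          else if l = 3 then -4 else if l = 4 then 4 else 0) * v (.A l) from rfl]
  rw [show (∑ j : Fin m, Rmat M (.F i b c) (.B j) * v (.B j))
      = ∑ j : Fin m, (if j = i then (-1:ℝ) else 0) * v (.B j) from rfl, sum_fin_ite]
  rw [show (∑ k : Fin 2, Rmat M (.F i b c) (.C k) * v (.C k))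
      = ∑ k : Fin 2, (if k = 0 then 2 * bnum b - 1 else 2 * bnum c - 1) * v (.C k) from rfl]
  rw [show (∑ i' : Fin m, ∑ b' : Bool, ∑ c' : Bool, Rmat M (.F i b c) (.E i' b' c') * v (.E i' b' c'))
      = ∑ i' : Fin m, ∑ b' : Bool, ∑ c' : Bool,
          (if i' = i ∧ b' = b ∧ c' = c then (1:ℝ) else 0) * v (.E i' b' c') from rfl, sum3_ite]
  rw [show (∑ i' : Fin m, ∑ b' : Bool, ∑ c' : Bool, Rmat M (.F i b c) (.F i' b' c') * v (.F i' b' c'))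
      = ∑ i' : Fin m, ∑ b' : Bool, ∑ c' : Bool,
          (if i' = i ∧ b' = b ∧ c' = c then (1:ℝ) else 0) * v (.F i' b' c') from rfl, sum3_ite]
  simp +decide [Fin.sum_univ_five, Fin.sum_univ_two,
    show ∀ k, Rmat M (.F i b c) (.D k) = 0 from fun _ => rfl]
  try ring

end Rows
section Sol
open Set Finset
variable {m : ℕ} {M : CounterMachine m} {i0 : Fin m} {C₁ C₂ : ℕ} {y z : ℝ → Idx m → ℝ}

lemma sol_nonneg_inc (h : IsSkorokhodSolution (Rmat M) (fluidX i0 C₁ C₂) y z)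
    (q : Idx m) {a s : ℝ} (h0a : 0 ≤ a) (has : a ≤ s) : 0 ≤ y s q - y a q := by
  have := h.2.2.2.2.2.1 q (show a ∈ Ici (0:ℝ) from h0a) (show s ∈ Ici (0:ℝ) from h0a.trans has) has
  simpa using this

lemma zid (h : IsSkorokhodSolution (Rmat M) (fluidX i0 C₁ C₂) y z)
    (a s : ℝ) (h0a : 0 ≤ a) (h0s : 0 ≤ s) (p : Idx m) :
    z s p = z a p + thetaVec m p * (s - a)
      + (Rmat M).mulVec (fun q => y s q - y a q) p := by
  have es := congrFun (h.2.2.1 s h0s) p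
  have ea := congrFun (h.2.2.1 a h0a) p
  have hmv : (Rmat M).mulVec (fun q => y s q - y a q) p
      = (Rmat M).mulVec (y s) p - (Rmat M).mulVec (y a) p := by
    have : (fun q => y s q - y a q) = y s - y a := rfl
    rw [this, Matrix.mulVec_sub]; rfl
  rw [hmv]
  have hxs : fluidX i0 C₁ C₂ s p - fluidX i0 C₁ C₂ a p = thetaVec m p * (s - a) := by
    simp only [fluidX]; ring
  have es' : z s p = fluidX i0 C₁ C₂ s p + (Rmat M).mulVec (y s) p := es
  have ea' : z a p = fluidX i0 C₁ C₂ a p + (Rmat M).mulVec (y a) p := ea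
  rw [es', ea']
  linarith

/-- freeze: if `Δy_j ≤ z_j` on `[a,b]` then `y_j` is constant there. -/
lemma freeze_of (h : IsSkorokhodSolution (Rmat M) (fluidX i0 C₁ C₂) y z)
    (j : Idx m) (a b : ℝ) (h0a : 0 ≤ a)
    (hub : ∀ s ∈ Icc a b, y s j - y a j ≤ z s j) :
    ∀ s ∈ Icc a b, y s j = y a j := by
  intro s hs
  have key := key_ub (fun s => y s j) (fun s => z s j) a b 0 0 h0a le_rfl le_rfl
    ((h.2.2.2.2.2.1 j).mono (Icc_subset_Ici_self.trans (Ici_subset_Ici.mpr h0a) : Icc a b ⊆ Ici 0))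
    (((continuous_apply j).comp_continuousOn h.1).mono
      (Icc_subset_Ici_self.trans (Ici_subset_Ici.mpr h0a)))
    (fun s₁ s₂ h1 h2 _ hp => h.2.2.2.2.2.2 j s₁ s₂ (h0a.trans h1) h2 hp)
    (by intro s hs; simpa using hub s hs) s hs
  have h2 := sol_nonneg_inc h j h0a hs.1
  simp at key
  linarith

/-- upper bound: from `v - K(s-a) + Δy_j ≤ z_j`. -/
lemma ub_of (h : IsSkorokhodSolution (Rmat M) (fluidX i0 C₁ C₂) y z)
    (j : Idx m) (a b v K : ℝ) (h0a : 0 ≤ a) (hv : 0 ≤ v) (hK : 0 ≤ K)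
    (hub : ∀ s ∈ Icc a b, v - K * (s - a) + (y s j - y a j) ≤ z s j) :
    ∀ s ∈ Icc a b, y s j - y a j ≤ max 0 (K * (s - a) - v) :=
  key_ub (fun s => y s j) (fun s => z s j) a b v K h0a hv hK
    ((h.2.2.2.2.2.1 j).mono (Icc_subset_Ici_self.trans (Ici_subset_Ici.mpr h0a)))
    (((continuous_apply j).comp_continuousOn h.1).mono
      (Icc_subset_Ici_self.trans (Ici_subset_Ici.mpr h0a)))
    (fun s₁ s₂ h1 h2 _ hp => h.2.2.2.2.2.2 j s₁ s₂ (h0a.trans h1) h2 hp)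
    hub

/-- pin: if `z_j = v - K(s-a) + Δy_j` exactly, then `Δy_j = max 0 (K(s-a) - v)`. -/
lemma pin_of (h : IsSkorokhodSolution (Rmat M) (fluidX i0 C₁ C₂) y z)
    (j : Idx m) (a b v K : ℝ) (h0a : 0 ≤ a) (hv : 0 ≤ v) (hK : 0 ≤ K)
    (heq : ∀ s ∈ Icc a b, z s j = v - K * (s - a) + (y s j - y a j)) :
    ∀ s ∈ Icc a b, y s j - y a j = max 0 (K * (s - a) - v) := by
  intro s hs
  have hub := ub_of h j a b v K h0a hv hK (fun s hs => (heq s hs).ge) s hs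
  have hz := h.2.2.2.1 s (h0a.trans hs.1) j
  rw [heq s hs] at hz
  have h2 := sol_nonneg_inc h j h0a hs.1
  rcases le_total (K * (s - a) - v) 0 with hc | hc
  · rw [max_eq_left hc] at hub ⊢; linarith
  · rw [max_eq_right hc] at hub ⊢; linarith

end Sol
section Phases
open Set Finset
variable {m : ℕ} {M : CounterMachine m} {i0 : Fin m} {C₁ C₂ : ℕ} {y z : ℝ → Idx m → ℝ}

lemma zid_A (h : IsSkorokhodSolution (Rmat M) (fluidX i0 C₁ C₂) y z)
    (a s : ℝ) (h0a : 0 ≤ a) (h0s : 0 ≤ s) (k : Fin 5) :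
    z s (.A k) = z a (.A k) - (s - a)
      + ∑ l : Fin 5, AAmat k l * (y s (.A l) - y a (.A l)) := by
  rw [zid h a s h0a h0s, row_A]; simp only [thetaVec]; ring

lemma phaseA0 (h : IsSkorokhodSolution (Rmat M) (fluidX i0 C₁ C₂) y z)
    (T : ℝ) (hT : 0 ≤ T) (hw : ∀ l : Fin 5, z T (.A l) = ![0,1,1,1,0] l) :
    (∀ s ∈ Icc T (T+1), ∀ l : Fin 5, y s (.A l) - y T (.A l) = ![s-T,0,0,0,0] l) ∧
    (∀ s ∈ Icc T (T+1), ∀ l : Fin 5, z s (.A l) = ![0,1-(s-T),1,1,s-T] l) := by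
  have hge : ∀ (q : Idx m), ∀ s ∈ Icc T (T+1), 0 ≤ y s q - y T q :=
    fun q s hs => sol_nonneg_inc h q hT hs.1
  have hzA : ∀ s ∈ Icc T (T+1), ∀ j : Fin 5, z s (.A j) = ![0,1,1,1,0] j - (s - T)
      + ∑ l : Fin 5, AAmat j l * (y s (.A l) - y T (.A l)) := fun s hs j => by
    rw [zid_A h T s hT (hT.trans hs.1) j, hw]
  have hF1 : ∀ s ∈ Icc T (T+1), y s (.A 1) = y T (.A 1) := by
    apply freeze_of h _ _ _ hT
    intro s hs
    have e := hzA s hs 1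
    have h0 := hge (.A 0) s hs; have h1 := hge (.A 1) s hs; have h2 := hge (.A 2) s hs
    have h3 := hge (.A 3) s hs; have h4 := hge (.A 4) s hs
    rw [e]; simp [AAmat, Fin.sum_univ_five]
    nlinarith [hs.1, hs.2]
  have hF2 : ∀ s ∈ Icc T (T+1), y s (.A 2) = y T (.A 2) := by
    apply freeze_of h _ _ _ hT
    intro s hs
    have e := hzA s hs 2
    have h0 := hge (.A 0) s hs; have h1 := hge (.A 1) s hs; have h2 := hge (.A 2) s hs
    have h3 := hge (.A 3) s hs; have h4 := hge (.A 4) s hs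
    rw [e]; simp [AAmat, Fin.sum_univ_five]
    nlinarith [hs.1, hs.2]
  have hF3 : ∀ s ∈ Icc T (T+1), y s (.A 3) = y T (.A 3) := by
    apply freeze_of h _ _ _ hT
    intro s hs
    have e := hzA s hs 3
    have h0 := hge (.A 0) s hs; have h1 := hge (.A 1) s hs; have h2 := hge (.A 2) s hs
    have h3 := hge (.A 3) s hs; have h4 := hge (.A 4) s hs
    rw [e]; simp [AAmat, Fin.sum_univ_five]
    nlinarith [hs.1, hs.2]
  have hP : ∀ s ∈ Icc T (T+1), y s (.A 0) - y T (.A 0) = s - T := by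
    intro s hs
    have key := pin_of h (.A 0) T (T+1) 0 1 hT le_rfl zero_le_one (fun s hs => by
      rw [hzA s hs 0]
      simp [AAmat, Fin.sum_univ_five, hF1 s hs, hF2 s hs, hF3 s hs]
      try ring) s hs
    rw [key, max_eq_right] <;> linarith [hs.1]
  have hFp : ∀ s ∈ Icc T (T+1), y s (.A 4) = y T (.A 4) := by
    apply freeze_of h _ _ _ hT
    intro s hs
    rw [hzA s hs 4]
    simp [AAmat, Fin.sum_univ_five, hF1 s hs, hF2 s hs, hF3 s hs, hP s hs]
    linarith [hs.1]
  constructor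
  · intro s hs l
    fin_cases l <;>
      simp [hP s hs, hF1 s hs, hF2 s hs, hF3 s hs, hFp s hs]
  · intro s hs l
    rw [hzA s hs l]
    fin_cases l <;>
      simp [AAmat, Fin.sum_univ_five, hP s hs, hF1 s hs, hF2 s hs,
        hF3 s hs, hFp s hs] <;> ring

lemma phaseA1 (h : IsSkorokhodSolution (Rmat M) (fluidX i0 C₁ C₂) y z)
    (T : ℝ) (hT : 0 ≤ T) (hw : ∀ l : Fin 5, z T (.A l) = ![0,0,1,1,1] l) :
    (∀ s ∈ Icc T (T+1), ∀ l : Fin 5, y s (.A l) - y T (.A l) = ![0,s-T,0,0,0] l) ∧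
    (∀ s ∈ Icc T (T+1), ∀ l : Fin 5, z s (.A l) = ![s-T,0,1-(s-T),1,1] l) := by
  have hge : ∀ (q : Idx m), ∀ s ∈ Icc T (T+1), 0 ≤ y s q - y T q :=
    fun q s hs => sol_nonneg_inc h q hT hs.1
  have hzA : ∀ s ∈ Icc T (T+1), ∀ j : Fin 5, z s (.A j) = ![0,0,1,1,1] j - (s - T)
      + ∑ l : Fin 5, AAmat j l * (y s (.A l) - y T (.A l)) := fun s hs j => by
    rw [zid_A h T s hT (hT.trans hs.1) j, hw]
  have hF2 : ∀ s ∈ Icc T (T+1), y s (.A 2) = y T (.A 2) := by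
    apply freeze_of h _ _ _ hT
    intro s hs
    have e := hzA s hs 2
    have h0 := hge (.A 0) s hs; have h1 := hge (.A 1) s hs; have h2 := hge (.A 2) s hs
    have h3 := hge (.A 3) s hs; have h4 := hge (.A 4) s hs
    rw [e]; simp [AAmat, Fin.sum_univ_five]
    nlinarith [hs.1, hs.2]
  have hF3 : ∀ s ∈ Icc T (T+1), y s (.A 3) = y T (.A 3) := by
    apply freeze_of h _ _ _ hT
    intro s hs
    have e := hzA s hs 3
    have h0 := hge (.A 0) s hs; have h1 := hge (.A 1) s hs; have h2 := hge (.A 2) s hs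
    have h3 := hge (.A 3) s hs; have h4 := hge (.A 4) s hs
    rw [e]; simp [AAmat, Fin.sum_univ_five]
    nlinarith [hs.1, hs.2]
  have hF4 : ∀ s ∈ Icc T (T+1), y s (.A 4) = y T (.A 4) := by
    apply freeze_of h _ _ _ hT
    intro s hs
    have e := hzA s hs 4
    have h0 := hge (.A 0) s hs; have h1 := hge (.A 1) s hs; have h2 := hge (.A 2) s hs
    have h3 := hge (.A 3) s hs; have h4 := hge (.A 4) s hs
    rw [e]; simp [AAmat, Fin.sum_univ_five]
    nlinarith [hs.1, hs.2]
  have hP : ∀ s ∈ Icc T (T+1), y s (.A 1) - y T (.A 1) = s - T := by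
    intro s hs
    have key := pin_of h (.A 1) T (T+1) 0 1 hT le_rfl zero_le_one (fun s hs => by
      rw [hzA s hs 1]
      simp [AAmat, Fin.sum_univ_five, hF2 s hs, hF3 s hs, hF4 s hs]
      try ring) s hs
    rw [key, max_eq_right] <;> linarith [hs.1]
  have hFp : ∀ s ∈ Icc T (T+1), y s (.A 0) = y T (.A 0) := by
    apply freeze_of h _ _ _ hT
    intro s hs
    rw [hzA s hs 0]
    simp [AAmat, Fin.sum_univ_five, hF2 s hs, hF3 s hs, hF4 s hs, hP s hs]
    linarith [hs.1]
  constructor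
  · intro s hs l
    fin_cases l <;>
      simp [hP s hs, hF2 s hs, hF3 s hs, hF4 s hs, hFp s hs]
  · intro s hs l
    rw [hzA s hs l]
    fin_cases l <;>
      simp [AAmat, Fin.sum_univ_five, hP s hs, hF2 s hs, hF3 s hs,
        hF4 s hs, hFp s hs] <;> ring

lemma phaseA2 (h : IsSkorokhodSolution (Rmat M) (fluidX i0 C₁ C₂) y z)
    (T : ℝ) (hT : 0 ≤ T) (hw : ∀ l : Fin 5, z T (.A l) = ![1,0,0,1,1] l) :
    (∀ s ∈ Icc T (T+1), ∀ l : Fin 5, y s (.A l) - y T (.A l) = ![0,0,s-T,0,0] l) ∧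
    (∀ s ∈ Icc T (T+1), ∀ l : Fin 5, z s (.A l) = ![1,s-T,0,1-(s-T),1] l) := by
  have hge : ∀ (q : Idx m), ∀ s ∈ Icc T (T+1), 0 ≤ y s q - y T q :=
    fun q s hs => sol_nonneg_inc h q hT hs.1
  have hzA : ∀ s ∈ Icc T (T+1), ∀ j : Fin 5, z s (.A j) = ![1,0,0,1,1] j - (s - T)
      + ∑ l : Fin 5, AAmat j l * (y s (.A l) - y T (.A l)) := fun s hs j => by
    rw [zid_A h T s hT (hT.trans hs.1) j, hw]
  have hF3 : ∀ s ∈ Icc T (T+1), y s (.A 3) = y T (.A 3) := by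
    apply freeze_of h _ _ _ hT
    intro s hs
    have e := hzA s hs 3
    have h0 := hge (.A 0) s hs; have h1 := hge (.A 1) s hs; have h2 := hge (.A 2) s hs
    have h3 := hge (.A 3) s hs; have h4 := hge (.A 4) s hs
    rw [e]; simp [AAmat, Fin.sum_univ_five]
    nlinarith [hs.1, hs.2]
  have hF4 : ∀ s ∈ Icc T (T+1), y s (.A 4) = y T (.A 4) := by
    apply freeze_of h _ _ _ hT
    intro s hs
    have e := hzA s hs 4
    have h0 := hge (.A 0) s hs; have h1 := hge (.A 1) s hs; have h2 := hge (.A 2) s hs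
    have h3 := hge (.A 3) s hs; have h4 := hge (.A 4) s hs
    rw [e]; simp [AAmat, Fin.sum_univ_five]
    nlinarith [hs.1, hs.2]
  have hF0 : ∀ s ∈ Icc T (T+1), y s (.A 0) = y T (.A 0) := by
    apply freeze_of h _ _ _ hT
    intro s hs
    have e := hzA s hs 0
    have h0 := hge (.A 0) s hs; have h1 := hge (.A 1) s hs; have h2 := hge (.A 2) s hs
    have h3 := hge (.A 3) s hs; have h4 := hge (.A 4) s hs
    rw [e]; simp [AAmat, Fin.sum_univ_five]
    nlinarith [hs.1, hs.2]
  have hP : ∀ s ∈ Icc T (T+1), y s (.A 2) - y T (.A 2) = s - T := by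
    intro s hs
    have key := pin_of h (.A 2) T (T+1) 0 1 hT le_rfl zero_le_one (fun s hs => by
      rw [hzA s hs 2]
      simp [AAmat, Fin.sum_univ_five, hF3 s hs, hF4 s hs, hF0 s hs]
      try ring) s hs
    rw [key, max_eq_right] <;> linarith [hs.1]
  have hFp : ∀ s ∈ Icc T (T+1), y s (.A 1) = y T (.A 1) := by
    apply freeze_of h _ _ _ hT
    intro s hs
    rw [hzA s hs 1]
    simp [AAmat, Fin.sum_univ_five, hF3 s hs, hF4 s hs, hF0 s hs, hP s hs]
    linarith [hs.1]
  constructor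
  · intro s hs l
    fin_cases l <;>
      simp [hP s hs, hF3 s hs, hF4 s hs, hF0 s hs, hFp s hs]
  · intro s hs l
    rw [hzA s hs l]
    fin_cases l <;>
      simp [AAmat, Fin.sum_univ_five, hP s hs, hF3 s hs, hF4 s hs,
        hF0 s hs, hFp s hs] <;> ring

lemma phaseA3 (h : IsSkorokhodSolution (Rmat M) (fluidX i0 C₁ C₂) y z)
    (T : ℝ) (hT : 0 ≤ T) (hw : ∀ l : Fin 5, z T (.A l) = ![1,1,0,0,1] l) :
    (∀ s ∈ Icc T (T+1), ∀ l : Fin 5, y s (.A l) - y T (.A l) = ![0,0,0,s-T,0] l) ∧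
    (∀ s ∈ Icc T (T+1), ∀ l : Fin 5, z s (.A l) = ![1,1,s-T,0,1-(s-T)] l) := by
  have hge : ∀ (q : Idx m), ∀ s ∈ Icc T (T+1), 0 ≤ y s q - y T q :=
    fun q s hs => sol_nonneg_inc h q hT hs.1
  have hzA : ∀ s ∈ Icc T (T+1), ∀ j : Fin 5, z s (.A j) = ![1,1,0,0,1] j - (s - T)
      + ∑ l : Fin 5, AAmat j l * (y s (.A l) - y T (.A l)) := fun s hs j => by
    rw [zid_A h T s hT (hT.trans hs.1) j, hw]
  have hF4 : ∀ s ∈ Icc T (T+1), y s (.A 4) = y T (.A 4) := by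
    apply freeze_of h _ _ _ hT
    intro s hs
    have e := hzA s hs 4
    have h0 := hge (.A 0) s hs; have h1 := hge (.A 1) s hs; have h2 := hge (.A 2) s hs
    have h3 := hge (.A 3) s hs; have h4 := hge (.A 4) s hs
    rw [e]; simp [AAmat, Fin.sum_univ_five]
    nlinarith [hs.1, hs.2]
  have hF0 : ∀ s ∈ Icc T (T+1), y s (.A 0) = y T (.A 0) := by
    apply freeze_of h _ _ _ hT
    intro s hs
    have e := hzA s hs 0
    have h0 := hge (.A 0) s hs; have h1 := hge (.A 1) s hs; have h2 := hge (.A 2) s hs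
    have h3 := hge (.A 3) s hs; have h4 := hge (.A 4) s hs
    rw [e]; simp [AAmat, Fin.sum_univ_five]
    nlinarith [hs.1, hs.2]
  have hF1 : ∀ s ∈ Icc T (T+1), y s (.A 1) = y T (.A 1) := by
    apply freeze_of h _ _ _ hT
    intro s hs
    have e := hzA s hs 1
    have h0 := hge (.A 0) s hs; have h1 := hge (.A 1) s hs; have h2 := hge (.A 2) s hs
    have h3 := hge (.A 3) s hs; have h4 := hge (.A 4) s hs
    rw [e]; simp [AAmat, Fin.sum_univ_five]
    nlinarith [hs.1, hs.2]
  have hP : ∀ s ∈ Icc T (T+1), y s (.A 3) - y T (.A 3) = s - T := by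
    intro s hs
    have key := pin_of h (.A 3) T (T+1) 0 1 hT le_rfl zero_le_one (fun s hs => by
      rw [hzA s hs 3]
      simp [AAmat, Fin.sum_univ_five, hF4 s hs, hF0 s hs, hF1 s hs]
      try ring) s hs
    rw [key, max_eq_right] <;> linarith [hs.1]
  have hFp : ∀ s ∈ Icc T (T+1), y s (.A 2) = y T (.A 2) := by
    apply freeze_of h _ _ _ hT
    intro s hs
    rw [hzA s hs 2]
    simp [AAmat, Fin.sum_univ_five, hF4 s hs, hF0 s hs, hF1 s hs, hP s hs]
    linarith [hs.1]
  constructor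
  · intro s hs l
    fin_cases l <;>
      simp [hP s hs, hF4 s hs, hF0 s hs, hF1 s hs, hFp s hs]
  · intro s hs l
    rw [hzA s hs l]
    fin_cases l <;>
      simp [AAmat, Fin.sum_univ_five, hP s hs, hF4 s hs, hF0 s hs,
        hF1 s hs, hFp s hs] <;> ring

lemma phaseA4 (h : IsSkorokhodSolution (Rmat M) (fluidX i0 C₁ C₂) y z)
    (T : ℝ) (hT : 0 ≤ T) (hw : ∀ l : Fin 5, z T (.A l) = ![1,1,1,0,0] l) :
    (∀ s ∈ Icc T (T+1), ∀ l : Fin 5, y s (.A l) - y T (.A l) = ![0,0,0,0,s-T] l) ∧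
    (∀ s ∈ Icc T (T+1), ∀ l : Fin 5, z s (.A l) = ![1-(s-T),1,1,s-T,0] l) := by
  have hge : ∀ (q : Idx m), ∀ s ∈ Icc T (T+1), 0 ≤ y s q - y T q :=
    fun q s hs => sol_nonneg_inc h q hT hs.1
  have hzA : ∀ s ∈ Icc T (T+1), ∀ j : Fin 5, z s (.A j) = ![1,1,1,0,0] j - (s - T)
      + ∑ l : Fin 5, AAmat j l * (y s (.A l) - y T (.A l)) := fun s hs j => by
    rw [zid_A h T s hT (hT.trans hs.1) j, hw]
  have hF0 : ∀ s ∈ Icc T (T+1), y s (.A 0) = y T (.A 0) := by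
    apply freeze_of h _ _ _ hT
    intro s hs
    have e := hzA s hs 0
    have h0 := hge (.A 0) s hs; have h1 := hge (.A 1) s hs; have h2 := hge (.A 2) s hs
    have h3 := hge (.A 3) s hs; have h4 := hge (.A 4) s hs
    rw [e]; simp [AAmat, Fin.sum_univ_five]
    nlinarith [hs.1, hs.2]
  have hF1 : ∀ s ∈ Icc T (T+1), y s (.A 1) = y T (.A 1) := by
    apply freeze_of h _ _ _ hT
    intro s hs
    have e := hzA s hs 1
    have h0 := hge (.A 0) s hs; have h1 := hge (.A 1) s hs; have h2 := hge (.A 2) s hs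
    have h3 := hge (.A 3) s hs; have h4 := hge (.A 4) s hs
    rw [e]; simp [AAmat, Fin.sum_univ_five]
    nlinarith [hs.1, hs.2]
  have hF2 : ∀ s ∈ Icc T (T+1), y s (.A 2) = y T (.A 2) := by
    apply freeze_of h _ _ _ hT
    intro s hs
    have e := hzA s hs 2
    have h0 := hge (.A 0) s hs; have h1 := hge (.A 1) s hs; have h2 := hge (.A 2) s hs
    have h3 := hge (.A 3) s hs; have h4 := hge (.A 4) s hs
    rw [e]; simp [AAmat, Fin.sum_univ_five]
    nlinarith [hs.1, hs.2]
  have hP : ∀ s ∈ Icc T (T+1), y s (.A 4) - y T (.A 4) = s - T := by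
    intro s hs
    have key := pin_of h (.A 4) T (T+1) 0 1 hT le_rfl zero_le_one (fun s hs => by
      rw [hzA s hs 4]
      simp [AAmat, Fin.sum_univ_five, hF0 s hs, hF1 s hs, hF2 s hs]
      try ring) s hs
    rw [key, max_eq_right] <;> linarith [hs.1]
  have hFp : ∀ s ∈ Icc T (T+1), y s (.A 3) = y T (.A 3) := by
    apply freeze_of h _ _ _ hT
    intro s hs
    rw [hzA s hs 3]
    simp [AAmat, Fin.sum_univ_five, hF0 s hs, hF1 s hs, hF2 s hs, hP s hs]
    linarith [hs.1]
  constructor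
  · intro s hs l
    fin_cases l <;>
      simp [hP s hs, hF0 s hs, hF1 s hs, hF2 s hs, hFp s hs]
  · intro s hs l
    rw [hzA s hs l]
    fin_cases l <;>
      simp [AAmat, Fin.sum_univ_five, hP s hs, hF0 s hs, hF1 s hs,
        hF2 s hs, hFp s hs] <;> ring


lemma zid_B (h : IsSkorokhodSolution (Rmat M) (fluidX i0 C₁ C₂) y z)
    (a s : ℝ) (h0a : 0 ≤ a) (h0s : 0 ≤ s) (j : Fin m) :
    z s (.B j) = z a (.B j) - (y s (.A 0) - y a (.A 0)) + (y s (.B j) - y a (.B j))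
      + ∑ i' : Fin m, ∑ b : Bool, ∑ c : Bool,
          (if (M.Γ i' b c).1 = j then 0 else 1) * (y s (.E i' b c) - y a (.E i' b c)) := by
  rw [zid h a s h0a h0s, row_B]; simp only [thetaVec]; ring

lemma zid_C (h : IsSkorokhodSolution (Rmat M) (fluidX i0 C₁ C₂) y z)
    (a s : ℝ) (h0a : 0 ≤ a) (h0s : 0 ≤ s) (k : Fin 2) :
    z s (.C k) = z a (.C k) - (y s (.A 0) - y a (.A 0)) - (y s (.A 3) - y a (.A 3))
      + (y s (.C k) - y a (.C k)) + (y s (.D k) - y a (.D k))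
      + ∑ i' : Fin m, ∑ b : Bool, ∑ c : Bool,
          ((if k = 0 then ((M.Γ i' b c).2.1 : ℝ) else ((M.Γ i' b c).2.2 : ℝ)) + 1)
            * (y s (.E i' b c) - y a (.E i' b c)) := by
  rw [zid h a s h0a h0s, row_C]; simp only [thetaVec]; ring

lemma zid_D (h : IsSkorokhodSolution (Rmat M) (fluidX i0 C₁ C₂) y z)
    (a s : ℝ) (h0a : 0 ≤ a) (h0s : 0 ≤ s) (k : Fin 2) :
    z s (.D k) = z a (.D k) - (y s (.A 1) - y a (.A 1))
      + (y s (.C k) - y a (.C k)) + (y s (.D k) - y a (.D k)) := by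
  rw [zid h a s h0a h0s, row_D]; simp only [thetaVec]; ring

lemma zid_E (h : IsSkorokhodSolution (Rmat M) (fluidX i0 C₁ C₂) y z)
    (a s : ℝ) (h0a : 0 ≤ a) (h0s : 0 ≤ s) (i' : Fin m) (b c : Bool) :
    z s (.E i' b c) = z a (.E i' b c)
      + (-(bnum b) - bnum c) * (y s (.A 0) - y a (.A 0)) - (y s (.A 2) - y a (.A 2))
      - (y s (.B i') - y a (.B i'))
      + (2 * bnum b - 1) * (y s (.C 0) - y a (.C 0))
      + (2 * bnum c - 1) * (y s (.C 1) - y a (.C 1))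
      + (y s (.E i' b c) - y a (.E i' b c)) + (y s (.F i' b c) - y a (.F i' b c)) := by
  rw [zid h a s h0a h0s, row_E]; simp only [thetaVec]; ring

lemma zid_F (h : IsSkorokhodSolution (Rmat M) (fluidX i0 C₁ C₂) y z)
    (a s : ℝ) (h0a : 0 ≤ a) (h0s : 0 ≤ s) (i' : Fin m) (b c : Bool) :
    z s (.F i' b c) = z a (.F i' b c)
      + (-(bnum b) - bnum c) * (y s (.A 0) - y a (.A 0)) - (y s (.A 2) - y a (.A 2))
      - 4 * (y s (.A 3) - y a (.A 3)) + 4 * (y s (.A 4) - y a (.A 4))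
      - (y s (.B i') - y a (.B i'))
      + (2 * bnum b - 1) * (y s (.C 0) - y a (.C 0))
      + (2 * bnum c - 1) * (y s (.C 1) - y a (.C 1))
      + (y s (.E i' b c) - y a (.E i' b c)) + (y s (.F i' b c) - y a (.F i' b c)) := by
  rw [zid h a s h0a h0s, row_F]; simp only [thetaVec]; ring

lemma sum3_nonneg (coef g : Fin m → Bool → Bool → ℝ)
    (hc : ∀ i b c, 0 ≤ coef i b c) (hg : ∀ i b c, 0 ≤ g i b c) :
    0 ≤ ∑ i : Fin m, ∑ b : Bool, ∑ c : Bool, coef i b c * g i b c := by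
  apply Finset.sum_nonneg; intro i _
  apply Finset.sum_nonneg; intro b _
  apply Finset.sum_nonneg; intro c _
  exact mul_nonneg (hc i b c) (hg i b c)

lemma sum3_zero' (g : Fin m → Bool → Bool → ℝ) (hg : ∀ i b c, g i b c = 0) :
    (∑ i : Fin m, ∑ b : Bool, ∑ c : Bool, g i b c) = 0 := by simp [hg]

lemma sum3_single' (coef f : Fin m → Bool → Bool → ℝ) (i : Fin m) (b c : Bool)
    (hf : ∀ i' b' c', ¬(i' = i ∧ b' = b ∧ c' = c) → f i' b' c' = 0) :
    (∑ i' : Fin m, ∑ b' : Bool, ∑ c' : Bool, coef i' b' c' * f i' b' c')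
      = coef i b c * f i b c := by
  have hterm : ∀ i' b' c', coef i' b' c' * f i' b' c'
      = (if i' = i ∧ b' = b ∧ c' = c then (1:ℝ) else 0) * (coef i b c * f i b c) := by
    intro i' b' c'
    by_cases hcond : i' = i ∧ b' = b ∧ c' = c
    · obtain ⟨h1, h2, h3⟩ := hcond; subst h1; subst h2; subst h3; simp
    · simp [hcond, hf i' b' c' hcond]
  calc (∑ i' : Fin m, ∑ b' : Bool, ∑ c' : Bool, coef i' b' c' * f i' b' c')
      = ∑ i' : Fin m, ∑ b' : Bool, ∑ c' : Bool,
          (if i' = i ∧ b' = b ∧ c' = c then (1:ℝ) else 0) * (coef i b c * f i b c) := by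
        apply Finset.sum_congr rfl; intro i' _
        apply Finset.sum_congr rfl; intro b' _
        apply Finset.sum_congr rfl; intro c' _
        exact hterm i' b' c'
    _ = coef i b c * f i b c := sum3_ite i b c _

lemma max_one_sub_nat (N : ℕ) : max 0 (1 - (N:ℝ)) = indC (N = 0) := by
  rcases N with _ | n
  · simp [indC]
  · simp only [indC, Nat.succ_ne_zero, if_false]
    rw [max_eq_left]
    push_cast
    linarith

lemma delta_bound (M : CounterMachine m) (i : Fin m) (b c : Bool) :
    (-1:ℤ) ≤ (M.Γ i b c).2.1 ∧ (M.Γ i b c).2.1 ≤ 1 ∧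
    (-1:ℤ) ≤ (M.Γ i b c).2.2 ∧ (M.Γ i b c).2.2 ≤ 1 := by
  have hm := M.moves i b c
  simp only [Set.mem_insert_iff, Set.mem_singleton_iff, Prod.mk.injEq] at hm
  rcases hm with ⟨h1, h2⟩ | ⟨h1, h2⟩ | ⟨h1, h2⟩ | ⟨h1, h2⟩ | ⟨h1, h2⟩ <;> rw [h1, h2] <;> norm_num

/-- configuration data after phase 1 -/
def W1 {m : ℕ} (i : Fin m) (N₁ N₂ : ℕ) : Idx m → ℝ := fun p => match p with
  | .A l => ![0,0,1,1,1] l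
  | .B _ => 0
  | .C k => if k = 0 then max ((N₁:ℝ) - 1) 0 else max ((N₂:ℝ) - 1) 0
  | .D k => if k = 0 then indC (N₁ = 0) else indC (N₂ = 0)
  | .E i' b c => 3 + Upsilon i N₁ N₂ i' b c
  | .F i' b c => 4 + Upsilon i N₁ N₂ i' b c

lemma upsilon_le (i : Fin m) (N₁ N₂ : ℕ) (i' : Fin m) (b c : Bool) :
    Upsilon i N₁ N₂ i' b c ≤ 0 ∧ -3 ≤ Upsilon i N₁ N₂ i' b c := by
  unfold Upsilon indC
  cases b <;> cases c <;> by_cases h1 : N₁ = 0 <;> by_cases h2 : N₂ = 0 <;>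
    by_cases h3 : i' = i <;> simp [bnum, h1, h2, h3] <;> norm_num

lemma phase1 (h : IsSkorokhodSolution (Rmat M) (fluidX i0 C₁ C₂) y z)
    (i : Fin m) (N₁ N₂ : ℕ) (T : ℝ) (hT : 0 ≤ T)
    (hw : ∀ p, z T p = encCfg i N₁ N₂ p) :
    ∀ p, z (T+1) p = W1 i N₁ N₂ p := by
  have hIcc : ∀ {s : ℝ}, s ∈ Icc T (T+1) → 0 ≤ s := fun hs => hT.trans hs.1
  have hge : ∀ (q : Idx m), ∀ s ∈ Icc T (T+1), 0 ≤ y s q - y T q :=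
    fun q s hs => sol_nonneg_inc h q hT hs.1
  have hend : T + 1 ∈ Icc T (T+1) := ⟨by linarith, le_rfl⟩
  obtain ⟨hAinc, hAz⟩ := phaseA0 h T hT (fun l => by
    fin_cases l <;> simp [hw, encCfg])
  have dA0 : ∀ s ∈ Icc T (T+1), y s (.A 0) - y T (.A 0) = s - T :=
    fun s hs => by simpa using hAinc s hs 0
  have dA1 : ∀ s ∈ Icc T (T+1), y s (.A 1) - y T (.A 1) = 0 :=
    fun s hs => by simpa using hAinc s hs 1
  have dA2 : ∀ s ∈ Icc T (T+1), y s (.A 2) - y T (.A 2) = 0 :=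
    fun s hs => by simpa using hAinc s hs 2
  have dA3 : ∀ s ∈ Icc T (T+1), y s (.A 3) - y T (.A 3) = 0 :=
    fun s hs => by simpa using hAinc s hs 3
  have dA4 : ∀ s ∈ Icc T (T+1), y s (.A 4) - y T (.A 4) = 0 :=
    fun s hs => by simpa using hAinc s hs 4
  -- a-priori upper bound on B increments
  have hBub : ∀ j : Fin m, ∀ s ∈ Icc T (T+1), y s (.B j) - y T (.B j) ≤ s - T := by
    intro j
    have key := ub_of h (.B j) T (T+1) 0 1 hT le_rfl zero_le_one (fun s hs => by
      have e := zid_B h T s hT (hIcc hs) j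
      have hwB := hw (.B j)
      have hB0 : (0:ℝ) ≤ encCfg i N₁ N₂ (.B j) := by
        simp only [encCfg]; split <;> norm_num
      have hS : 0 ≤ ∑ i' : Fin m, ∑ b' : Bool, ∑ c' : Bool,
          (if (M.Γ i' b' c').1 = j then (0:ℝ) else 1)
            * (y s (.E i' b' c') - y T (.E i' b' c')) :=
        sum3_nonneg _ _ (fun i' b' c' => by split <;> norm_num)
          (fun i' b' c' => hge _ s hs)
      have e0 := dA0 s hs
      rw [hwB] at e
      linarith)
    intro s hs
    have := key s hs
    have h1 : (1:ℝ) * (s - T) - 0 = s - T := by ring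
    rw [h1] at this
    exact this.trans (max_le (by linarith [hs.1]) le_rfl)
  -- B coordinates other than i are frozen
  have dB' : ∀ j : Fin m, j ≠ i → ∀ s ∈ Icc T (T+1), y s (.B j) - y T (.B j) = 0 := by
    intro j hj
    have key := freeze_of h (.B j) T (T+1) hT (fun s hs => by
      have e := zid_B h T s hT (hIcc hs) j
      have hwB := hw (.B j)
      rw [hwB] at e
      have hB1 : encCfg i N₁ N₂ (.B j) = 1 := by simp [encCfg, hj]
      rw [hB1] at e
      have hS : 0 ≤ ∑ i' : Fin m, ∑ b' : Bool, ∑ c' : Bool,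
          (if (M.Γ i' b' c').1 = j then (0:ℝ) else 1)
            * (y s (.E i' b' c') - y T (.E i' b' c')) :=
        sum3_nonneg _ _ (fun i' b' c' => by split <;> norm_num)
          (fun i' b' c' => hge _ s hs)
      have e0 := dA0 s hs
      have := hs.2
      linarith)
    intro s hs; rw [key s hs, sub_self]
  -- D coordinates frozen
  have dD : ∀ k : Fin 2, ∀ s ∈ Icc T (T+1), y s (.D k) - y T (.D k) = 0 := by
    intro k
    have key := freeze_of h (.D k) T (T+1) hT (fun s hs => by
      have e := zid_D h T s hT (hIcc hs) k
      have hwD := hw (.D k)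
      have hD0 : encCfg i N₁ N₂ (.D k) = 0 := by simp [encCfg]
      rw [hwD, hD0] at e
      have e1 := dA1 s hs
      have hC := hge (.C k) s hs
      linarith)
    intro s hs; rw [key s hs, sub_self]
  -- nonnegativity of the C-row E-coefficients
  have hCcoef : ∀ (k : Fin 2) (i' : Fin m) (b' c' : Bool),
      (0:ℝ) ≤ (if k = 0 then ((M.Γ i' b' c').2.1 : ℝ) else ((M.Γ i' b' c').2.2 : ℝ)) + 1 := by
    intro k i' b' c'
    obtain ⟨h1, h2, h3, h4⟩ := delta_bound M i' b' c'
    have h1' : (-1:ℝ) ≤ ((M.Γ i' b' c').2.1 : ℝ) := by exact_mod_cast h1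
    have h3' : (-1:ℝ) ≤ ((M.Γ i' b' c').2.2 : ℝ) := by exact_mod_cast h3
    split <;> linarith
  -- a-priori upper bound on C increments
  have hCub : ∀ k : Fin 2, ∀ s ∈ Icc T (T+1), y s (.C k) - y T (.C k) ≤ s - T := by
    intro k
    have key := ub_of h (.C k) T (T+1) 0 1 hT le_rfl zero_le_one (fun s hs => by
      have e := zid_C h T s hT (hIcc hs) k
      have hwC := hw (.C k)
      have hC0 : (0:ℝ) ≤ encCfg i N₁ N₂ (.C k) := by
        simp only [encCfg]; split <;> positivity
      have hS : 0 ≤ ∑ i' : Fin m, ∑ b' : Bool, ∑ c' : Bool,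
          ((if k = 0 then ((M.Γ i' b' c').2.1 : ℝ) else ((M.Γ i' b' c').2.2 : ℝ)) + 1)
            * (y s (.E i' b' c') - y T (.E i' b' c')) :=
        sum3_nonneg _ _ (hCcoef k) (fun i' b' c' => hge _ s hs)
      have e0 := dA0 s hs
      have e3 := dA3 s hs
      have hD := hge (.D k) s hs
      rw [hwC] at e
      linarith)
    intro s hs
    have := key s hs
    have h1 : (1:ℝ) * (s - T) - 0 = s - T := by ring
    rw [h1] at this
    exact this.trans (max_le (by linarith [hs.1]) le_rfl)
  -- E and F coordinates frozen
  have dE : ∀ (i' : Fin m) (b' c' : Bool), ∀ s ∈ Icc T (T+1),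
      y s (.E i' b' c') - y T (.E i' b' c') = 0 := by
    intro i' b' c'
    have key := freeze_of h (.E i' b' c') T (T+1) hT (fun s hs => by
      have e := zid_E h T s hT (hIcc hs) i' b' c'
      have hwE := hw (.E i' b' c')
      have hE0 : encCfg i N₁ N₂ (.E i' b' c') = 3 := by simp [encCfg]
      rw [hwE, hE0] at e
      have e0 := dA0 s hs
      have e2 := dA2 s hs
      have hB := hBub i' s hs
      have hBg := hge (.B i') s hs
      have hc0 := hCub 0 s hs
      have hc1 := hCub 1 s hs
      have hc0g := hge (.C 0) s hs
      have hc1g := hge (.C 1) s hs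
      have hF := hge (.F i' b' c') s hs
      have hs2 := hs.2
      have hs1 := hs.1
      cases b' <;> cases c' <;> simp [bnum] at e <;> linarith)
    intro s hs; rw [key s hs, sub_self]
  have dF : ∀ (i' : Fin m) (b' c' : Bool), ∀ s ∈ Icc T (T+1),
      y s (.F i' b' c') - y T (.F i' b' c') = 0 := by
    intro i' b' c'
    have key := freeze_of h (.F i' b' c') T (T+1) hT (fun s hs => by
      have e := zid_F h T s hT (hIcc hs) i' b' c'
      have hwF := hw (.F i' b' c')
      have hF0 : encCfg i N₁ N₂ (.F i' b' c') = 4 := by simp [encCfg]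
      rw [hwF, hF0] at e
      have e0 := dA0 s hs
      have e2 := dA2 s hs
      have e3 := dA3 s hs
      have e4 := dA4 s hs
      have hB := hBub i' s hs
      have hBg := hge (.B i') s hs
      have hc0 := hCub 0 s hs
      have hc1 := hCub 1 s hs
      have hc0g := hge (.C 0) s hs
      have hc1g := hge (.C 1) s hs
      have hE := hge (.E i' b' c') s hs
      have hs2 := hs.2
      have hs1 := hs.1
      cases b' <;> cases c' <;> simp [bnum] at e <;> linarith)
    intro s hs; rw [key s hs, sub_self]
  -- vanishing of E-sums
  have hSB : ∀ (j : Fin m), ∀ s ∈ Icc T (T+1),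
      (∑ i' : Fin m, ∑ b' : Bool, ∑ c' : Bool,
        (if (M.Γ i' b' c').1 = j then (0:ℝ) else 1)
          * (y s (.E i' b' c') - y T (.E i' b' c'))) = 0 :=
    fun j s hs => sum3_zero' _ (fun i' b' c' => by rw [dE i' b' c' s hs, mul_zero])
  have hSC : ∀ (k : Fin 2), ∀ s ∈ Icc T (T+1),
      (∑ i' : Fin m, ∑ b' : Bool, ∑ c' : Bool,
        ((if k = 0 then ((M.Γ i' b' c').2.1 : ℝ) else ((M.Γ i' b' c').2.2 : ℝ)) + 1)
          * (y s (.E i' b' c') - y T (.E i' b' c'))) = 0 :=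
    fun k s hs => sum3_zero' _ (fun i' b' c' => by rw [dE i' b' c' s hs, mul_zero])
  -- pinned B increment at the current state
  have dBi : ∀ s ∈ Icc T (T+1), y s (.B i) - y T (.B i) = s - T := by
    have key := pin_of h (.B i) T (T+1) 0 1 hT le_rfl zero_le_one (fun s hs => by
      have e := zid_B h T s hT (hIcc hs) i
      have hwB := hw (.B i)
      have hB0 : encCfg i N₁ N₂ (.B i) = 0 := by simp [encCfg]
      rw [hwB, hB0] at e
      rw [hSB i s hs] at e
      have e0 := dA0 s hs
      linarith)
    intro s hs
    have := key s hs
    rw [this, max_eq_right (by linarith [hs.1])]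
    ring
  -- pinned C increments
  have dC : ∀ k : Fin 2, ∀ s ∈ Icc T (T+1),
      y s (.C k) - y T (.C k) = max 0 ((s - T) - (if k = 0 then (N₁:ℝ) else N₂)) := by
    intro k
    have hNk : (0:ℝ) ≤ (if k = 0 then (N₁:ℝ) else N₂) := by split <;> positivity
    have key := pin_of h (.C k) T (T+1) (if k = 0 then (N₁:ℝ) else N₂) 1 hT hNk
      zero_le_one (fun s hs => by
      have e := zid_C h T s hT (hIcc hs) k
      have hwC := hw (.C k)
      have hC0 : encCfg i N₁ N₂ (.C k) = (if k = 0 then (N₁:ℝ) else N₂) := by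
        simp only [encCfg]
      rw [hwC, hC0] at e
      rw [hSC k s hs] at e
      have e0 := dA0 s hs
      have e3 := dA3 s hs
      have eD := dD k s hs
      linarith)
    intro s hs
    have := key s hs
    rw [this, one_mul]
  -- now assemble the values at time T+1
  have h1T : (T + 1 - T) = (1:ℝ) := by ring
  have hBval : ∀ j : Fin m, y (T+1) (.B j) - y T (.B j) = indC (j = i) := by
    intro j
    by_cases hj : j = i
    · subst hj; rw [dBi (T+1) hend, h1T]; simp [indC]
    · rw [dB' j hj (T+1) hend]; simp [indC, hj]
  intro p
  rcases p with l | j | k | k | ⟨i', b', c'⟩ | ⟨i', b', c'⟩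
  · rw [hAz (T+1) hend l]
    fin_cases l <;> simp [W1] <;> ring
  · have e := zid_B h T (T+1) hT (by linarith) j
    rw [hw (.B j), hSB j (T+1) hend, hBval j, dA0 (T+1) hend, h1T] at e
    rw [e]
    simp only [encCfg, W1, indC]
    by_cases hj : j = i <;> simp [hj] <;> ring
  · have e := zid_C h T (T+1) hT (by linarith) k
    rw [hw (.C k), hSC k (T+1) hend, dC k (T+1) hend, dA0 (T+1) hend,
      dA3 (T+1) hend, dD k (T+1) hend, h1T] at e
    rw [e]
    simp only [encCfg, W1]
    by_cases hk : k = 0 <;> simp only [hk, if_true, if_false] <;>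
    [ (rcases le_total ((N₁:ℝ)) 1 with hN | hN
       · rw [max_eq_right (by linarith), max_eq_right (by linarith)]; ring
       · rw [max_eq_left (by linarith), max_eq_left (by linarith)]; ring);
      (rcases le_total ((N₂:ℝ)) 1 with hN | hN
       · rw [max_eq_right (by linarith), max_eq_right (by linarith)]; ring
       · rw [max_eq_left (by linarith), max_eq_left (by linarith)]; ring)]
  · have e := zid_D h T (T+1) hT (by linarith) k
    rw [hw (.D k), dC k (T+1) hend, dA1 (T+1) hend, dD k (T+1) hend, h1T] at e
    rw [e]
    simp only [encCfg, W1]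
    by_cases hk : k = 0 <;> simp only [hk, if_true, if_false] <;>
      rw [← max_one_sub_nat] <;> ring
  · have e := zid_E h T (T+1) hT (by linarith) i' b' c'
    rw [hw (.E i' b' c'), dA0 (T+1) hend, dA2 (T+1) hend, dC 0 (T+1) hend,
      dC 1 (T+1) hend, dE i' b' c' (T+1) hend, dF i' b' c' (T+1) hend,
      hBval i', h1T] at e
    rw [e]
    simp only [encCfg, W1, Upsilon]
    rw [← max_one_sub_nat N₁, ← max_one_sub_nat N₂]
    norm_num
    ring
  · have e := zid_F h T (T+1) hT (by linarith) i' b' c'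
    rw [hw (.F i' b' c'), dA0 (T+1) hend, dA2 (T+1) hend, dA3 (T+1) hend,
      dA4 (T+1) hend, dC 0 (T+1) hend, dC 1 (T+1) hend,
      dE i' b' c' (T+1) hend, dF i' b' c' (T+1) hend, hBval i', h1T] at e
    rw [e]
    simp only [encCfg, W1, Upsilon]
    rw [← max_one_sub_nat N₁, ← max_one_sub_nat N₂]
    norm_num
    ring

/-- configuration data after phase 2 -/
def W2 {m : ℕ} (i : Fin m) (N₁ N₂ : ℕ) : Idx m → ℝ := fun p => match p with
  | .A l => ![1,0,0,1,1] l
  | .B _ => 0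
  | .C k => if k = 0 then (N₁:ℝ) else (N₂:ℝ)
  | .D _ => 0
  | .E i' b c => 3 + Upsilon i N₁ N₂ i' b c
  | .F i' b c => 4 + Upsilon i N₁ N₂ i' b c

lemma phase2 (h : IsSkorokhodSolution (Rmat M) (fluidX i0 C₁ C₂) y z)
    (i : Fin m) (N₁ N₂ : ℕ) (T : ℝ) (hT : 0 ≤ T)
    (hw : ∀ p, z T p = W1 i N₁ N₂ p) :
    ∀ p, z (T+1) p = W2 i N₁ N₂ p := by
  have hIcc : ∀ {s : ℝ}, s ∈ Icc T (T+1) → 0 ≤ s := fun hs => hT.trans hs.1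
  have hge : ∀ (q : Idx m), ∀ s ∈ Icc T (T+1), 0 ≤ y s q - y T q :=
    fun q s hs => sol_nonneg_inc h q hT hs.1
  have hend : T + 1 ∈ Icc T (T+1) := ⟨by linarith, le_rfl⟩
  have h1T : (T + 1 - T) = (1:ℝ) := by ring
  obtain ⟨hAinc, hAz⟩ := phaseA1 h T hT (fun l => by
    fin_cases l <;> simp [hw, W1])
  have dA0 : ∀ s ∈ Icc T (T+1), y s (.A 0) - y T (.A 0) = 0 :=
    fun s hs => by simpa using hAinc s hs 0
  have dA1 : ∀ s ∈ Icc T (T+1), y s (.A 1) - y T (.A 1) = s - T :=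
    fun s hs => by simpa using hAinc s hs 1
  have dA2 : ∀ s ∈ Icc T (T+1), y s (.A 2) - y T (.A 2) = 0 :=
    fun s hs => by simpa using hAinc s hs 2
  have dA3 : ∀ s ∈ Icc T (T+1), y s (.A 3) - y T (.A 3) = 0 :=
    fun s hs => by simpa using hAinc s hs 3
  have dA4 : ∀ s ∈ Icc T (T+1), y s (.A 4) - y T (.A 4) = 0 :=
    fun s hs => by simpa using hAinc s hs 4
  -- all B coordinates frozen
  have dB : ∀ j : Fin m, ∀ s ∈ Icc T (T+1), y s (.B j) - y T (.B j) = 0 := by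
    intro j
    have key := freeze_of h (.B j) T (T+1) hT (fun s hs => by
      have e := zid_B h T s hT (hIcc hs) j
      have hwB := hw (.B j)
      have hB0 : W1 i N₁ N₂ (.B j) = 0 := rfl
      rw [hwB, hB0] at e
      have hS : 0 ≤ ∑ i' : Fin m, ∑ b' : Bool, ∑ c' : Bool,
          (if (M.Γ i' b' c').1 = j then (0:ℝ) else 1)
            * (y s (.E i' b' c') - y T (.E i' b' c')) :=
        sum3_nonneg _ _ (fun i' b' c' => by split <;> norm_num)
          (fun i' b' c' => hge _ s hs)
      have e0 := dA0 s hs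
      linarith)
    intro s hs; rw [key s hs, sub_self]
  -- nonnegativity of the C-row E-coefficients
  have hCcoef : ∀ (k : Fin 2) (i' : Fin m) (b' c' : Bool),
      (0:ℝ) ≤ (if k = 0 then ((M.Γ i' b' c').2.1 : ℝ) else ((M.Γ i' b' c').2.2 : ℝ)) + 1 := by
    intro k i' b' c'
    obtain ⟨h1, h2, h3, h4⟩ := delta_bound M i' b' c'
    have h1' : (-1:ℝ) ≤ ((M.Γ i' b' c').2.1 : ℝ) := by exact_mod_cast h1
    have h3' : (-1:ℝ) ≤ ((M.Γ i' b' c').2.2 : ℝ) := by exact_mod_cast h3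
    split <;> linarith
  -- all C coordinates frozen
  have dC : ∀ k : Fin 2, ∀ s ∈ Icc T (T+1), y s (.C k) - y T (.C k) = 0 := by
    intro k
    have key := freeze_of h (.C k) T (T+1) hT (fun s hs => by
      have e := zid_C h T s hT (hIcc hs) k
      have hwC := hw (.C k)
      have hC0 : (0:ℝ) ≤ W1 i N₁ N₂ (.C k) := by
        show (0:ℝ) ≤ if k = 0 then _ else _
        split <;> exact le_max_right _ _
      rw [hwC] at e
      have hS : 0 ≤ ∑ i' : Fin m, ∑ b' : Bool, ∑ c' : Bool,
          ((if k = 0 then ((M.Γ i' b' c').2.1 : ℝ) else ((M.Γ i' b' c').2.2 : ℝ)) + 1)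
            * (y s (.E i' b' c') - y T (.E i' b' c')) :=
        sum3_nonneg _ _ (hCcoef k) (fun i' b' c' => hge _ s hs)
      have e0 := dA0 s hs
      have e3 := dA3 s hs
      have hD := hge (.D k) s hs
      linarith)
    intro s hs; rw [key s hs, sub_self]
  -- all E and F coordinates frozen
  have dE : ∀ (i' : Fin m) (b' c' : Bool), ∀ s ∈ Icc T (T+1),
      y s (.E i' b' c') - y T (.E i' b' c') = 0 := by
    intro i' b' c'
    have key := freeze_of h (.E i' b' c') T (T+1) hT (fun s hs => by
      have e := zid_E h T s hT (hIcc hs) i' b' c'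
      have hwE := hw (.E i' b' c')
      have hE0 : W1 i N₁ N₂ (.E i' b' c') = 3 + Upsilon i N₁ N₂ i' b' c' := rfl
      rw [hwE, hE0] at e
      rw [dA0 s hs, dA2 s hs, dB i' s hs, dC 0 s hs, dC 1 s hs] at e
      have hF := hge (.F i' b' c') s hs
      have hup := (upsilon_le i N₁ N₂ i' b' c').2
      cases b' <;> cases c' <;> simp [bnum] at e <;> linarith)
    intro s hs; rw [key s hs, sub_self]
  have dF : ∀ (i' : Fin m) (b' c' : Bool), ∀ s ∈ Icc T (T+1),
      y s (.F i' b' c') - y T (.F i' b' c') = 0 := by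
    intro i' b' c'
    have key := freeze_of h (.F i' b' c') T (T+1) hT (fun s hs => by
      have e := zid_F h T s hT (hIcc hs) i' b' c'
      have hwF := hw (.F i' b' c')
      have hF0 : W1 i N₁ N₂ (.F i' b' c') = 4 + Upsilon i N₁ N₂ i' b' c' := rfl
      rw [hwF, hF0] at e
      rw [dA0 s hs, dA2 s hs, dA3 s hs, dA4 s hs, dB i' s hs, dC 0 s hs, dC 1 s hs] at e
      have hE := hge (.E i' b' c') s hs
      have hup := (upsilon_le i N₁ N₂ i' b' c').2
      cases b' <;> cases c' <;> simp [bnum] at e <;> linarith)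
    intro s hs; rw [key s hs, sub_self]
  -- E-sums vanish
  have hSB : ∀ (j : Fin m), ∀ s ∈ Icc T (T+1),
      (∑ i' : Fin m, ∑ b' : Bool, ∑ c' : Bool,
        (if (M.Γ i' b' c').1 = j then (0:ℝ) else 1)
          * (y s (.E i' b' c') - y T (.E i' b' c'))) = 0 :=
    fun j s hs => sum3_zero' _ (fun i' b' c' => by rw [dE i' b' c' s hs, mul_zero])
  have hSC : ∀ (k : Fin 2), ∀ s ∈ Icc T (T+1),
      (∑ i' : Fin m, ∑ b' : Bool, ∑ c' : Bool,
        ((if k = 0 then ((M.Γ i' b' c').2.1 : ℝ) else ((M.Γ i' b' c').2.2 : ℝ)) + 1)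
          * (y s (.E i' b' c') - y T (.E i' b' c'))) = 0 :=
    fun k s hs => sum3_zero' _ (fun i' b' c' => by rw [dE i' b' c' s hs, mul_zero])
  -- pinned D increments
  have dD : ∀ k : Fin 2, ∀ s ∈ Icc T (T+1),
      y s (.D k) - y T (.D k) = max 0 ((s - T) - W1 i N₁ N₂ (.D k)) := by
    intro k
    have hvD : (0:ℝ) ≤ W1 i N₁ N₂ (.D k) := by
      show (0:ℝ) ≤ if k = 0 then _ else _
      unfold indC; split <;> split <;> norm_num
    have key := pin_of h (.D k) T (T+1) (W1 i N₁ N₂ (.D k)) 1 hT hvD zero_le_one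
      (fun s hs => by
      have e := zid_D h T s hT (hIcc hs) k
      rw [hw (.D k), dA1 s hs, dC k s hs] at e
      rw [e]; ring)
    intro s hs
    have := key s hs
    rw [this, one_mul]
  -- assemble
  intro p
  rcases p with l | j | k | k | ⟨i', b', c'⟩ | ⟨i', b', c'⟩
  · rw [hAz (T+1) hend l]
    fin_cases l <;> simp [W2] <;> ring
  · have e := zid_B h T (T+1) hT (by linarith) j
    rw [hw (.B j), hSB j (T+1) hend, dB j (T+1) hend, dA0 (T+1) hend] at e
    rw [e]; show (0:ℝ) - 0 + 0 + 0 = 0; ring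
  · have e := zid_C h T (T+1) hT (by linarith) k
    rw [hw (.C k), hSC k (T+1) hend, dC k (T+1) hend, dA0 (T+1) hend,
      dA3 (T+1) hend, dD k (T+1) hend, h1T] at e
    rw [e]
    show _ = if k = 0 then (N₁:ℝ) else (N₂:ℝ)
    by_cases hk : k = 0 <;> simp only [W1, hk, if_true, if_false] <;>
    [ (by_cases hN : N₁ = 0;
       · simp [hN, indC]
       · have h1 : (1:ℝ) ≤ (N₁:ℝ) := by exact_mod_cast Nat.one_le_iff_ne_zero.mpr hN
         simp [hN, indC]
         try rw [max_eq_left (by linarith)]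
         try ring
         try linarith);
      (by_cases hN : N₂ = 0;
       · simp [hN, indC]
       · have h1 : (1:ℝ) ≤ (N₂:ℝ) := by exact_mod_cast Nat.one_le_iff_ne_zero.mpr hN
         simp [hN, indC]
         try rw [max_eq_left (by linarith)]
         try ring
         try linarith)]
  · have e := zid_D h T (T+1) hT (by linarith) k
    rw [hw (.D k), dA1 (T+1) hend, dC k (T+1) hend, dD k (T+1) hend, h1T] at e
    rw [e]
    show _ = (0:ℝ)
    by_cases hk : k = 0 <;> simp only [W1, hk, if_true, if_false] <;>
      unfold indC <;> split <;> norm_num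
  · have e := zid_E h T (T+1) hT (by linarith) i' b' c'
    rw [hw (.E i' b' c'), dA0 (T+1) hend, dA2 (T+1) hend, dB i' (T+1) hend,
      dC 0 (T+1) hend, dC 1 (T+1) hend, dE i' b' c' (T+1) hend,
      dF i' b' c' (T+1) hend] at e
    rw [e]
    show _ = 3 + Upsilon i N₁ N₂ i' b' c'
    simp only [W1]
    ring
  · have e := zid_F h T (T+1) hT (by linarith) i' b' c'
    rw [hw (.F i' b' c'), dA0 (T+1) hend, dA2 (T+1) hend, dA3 (T+1) hend,
      dA4 (T+1) hend, dB i' (T+1) hend, dC 0 (T+1) hend, dC 1 (T+1) hend,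
      dE i' b' c' (T+1) hend, dF i' b' c' (T+1) hend] at e
    rw [e]
    show _ = 4 + Upsilon i N₁ N₂ i' b' c'
    simp only [W1]
    ring

lemma upsilon_match (i : Fin m) (N₁ N₂ : ℕ) :
    Upsilon i N₁ N₂ i (decide (0 < N₁)) (decide (0 < N₂)) = -3 := by
  unfold Upsilon indC
  by_cases h1 : N₁ = 0 <;> by_cases h2 : N₂ = 0 <;>
    simp [bnum, h1, h2, Nat.pos_of_ne_zero] <;> norm_num

lemma upsilon_nonmatch (i : Fin m) (N₁ N₂ : ℕ) (i' : Fin m) (b c : Bool)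
    (hnm : ¬(i' = i ∧ b = decide (0 < N₁) ∧ c = decide (0 < N₂))) :
    -2 ≤ Upsilon i N₁ N₂ i' b c := by
  unfold Upsilon indC
  by_cases h1 : N₁ = 0 <;> by_cases h2 : N₂ = 0 <;> by_cases h3 : i' = i <;>
    cases b <;> cases c <;>
    simp [bnum, h1, h2, h3, Nat.pos_of_ne_zero] at hnm ⊢ <;> norm_num
/-- configuration data after phase 3 -/
def W3 {m : ℕ} (M : CounterMachine m) (i : Fin m) (N₁ N₂ : ℕ) : Idx m → ℝ := fun p =>
  match p with
  | .A l => ![1,1,0,0,1] l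
  | .B j => if (M.Γ i (decide (0 < N₁)) (decide (0 < N₂))).1 = j then 0 else 1
  | .C k => (if k = 0 then (N₁:ℝ) else (N₂:ℝ))
      + (if k = 0 then ((M.Γ i (decide (0 < N₁)) (decide (0 < N₂))).2.1:ℝ)
         else ((M.Γ i (decide (0 < N₁)) (decide (0 < N₂))).2.2:ℝ)) + 1
  | .D _ => 0
  | .E i' b c => if i' = i ∧ b = decide (0 < N₁) ∧ c = decide (0 < N₂) then 0
      else 2 + Upsilon i N₁ N₂ i' b c
  | .F i' b c => if i' = i ∧ b = decide (0 < N₁) ∧ c = decide (0 < N₂) then 1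
      else 3 + Upsilon i N₁ N₂ i' b c

lemma phase3 (h : IsSkorokhodSolution (Rmat M) (fluidX i0 C₁ C₂) y z)
    (i : Fin m) (N₁ N₂ : ℕ) (T : ℝ) (hT : 0 ≤ T)
    (hw : ∀ p, z T p = W2 i N₁ N₂ p) :
    ∀ p, z (T+1) p = W3 M i N₁ N₂ p := by
  have hIcc : ∀ {s : ℝ}, s ∈ Icc T (T+1) → 0 ≤ s := fun hs => hT.trans hs.1
  have hge : ∀ (q : Idx m), ∀ s ∈ Icc T (T+1), 0 ≤ y s q - y T q :=
    fun q s hs => sol_nonneg_inc h q hT hs.1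
  have hend : T + 1 ∈ Icc T (T+1) := ⟨by linarith, le_rfl⟩
  have h1T : (T + 1 - T) = (1:ℝ) := by ring
  obtain ⟨hAinc, hAz⟩ := phaseA2 h T hT (fun l => by
    fin_cases l <;> simp [hw, W2])
  have dA0 : ∀ s ∈ Icc T (T+1), y s (.A 0) - y T (.A 0) = 0 :=
    fun s hs => by simpa using hAinc s hs 0
  have dA1 : ∀ s ∈ Icc T (T+1), y s (.A 1) - y T (.A 1) = 0 :=
    fun s hs => by simpa using hAinc s hs 1
  have dA2 : ∀ s ∈ Icc T (T+1), y s (.A 2) - y T (.A 2) = s - T :=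
    fun s hs => by simpa using hAinc s hs 2
  have dA3 : ∀ s ∈ Icc T (T+1), y s (.A 3) - y T (.A 3) = 0 :=
    fun s hs => by simpa using hAinc s hs 3
  have dA4 : ∀ s ∈ Icc T (T+1), y s (.A 4) - y T (.A 4) = 0 :=
    fun s hs => by simpa using hAinc s hs 4
  -- all B coordinates frozen
  have dB : ∀ j : Fin m, ∀ s ∈ Icc T (T+1), y s (.B j) - y T (.B j) = 0 := by
    intro j
    have key := freeze_of h (.B j) T (T+1) hT (fun s hs => by
      have e := zid_B h T s hT (hIcc hs) j
      have hB0 : W2 i N₁ N₂ (.B j) = 0 := rfl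
      rw [hw (.B j), hB0] at e
      have hS : 0 ≤ ∑ i' : Fin m, ∑ b' : Bool, ∑ c' : Bool,
          (if (M.Γ i' b' c').1 = j then (0:ℝ) else 1)
            * (y s (.E i' b' c') - y T (.E i' b' c')) :=
        sum3_nonneg _ _ (fun i' b' c' => by split <;> norm_num)
          (fun i' b' c' => hge _ s hs)
      have e0 := dA0 s hs
      linarith)
    intro s hs; rw [key s hs, sub_self]
  have hCcoef : ∀ (k : Fin 2) (i' : Fin m) (b' c' : Bool),
      (0:ℝ) ≤ (if k = 0 then ((M.Γ i' b' c').2.1 : ℝ) else ((M.Γ i' b' c').2.2 : ℝ)) + 1 := by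
    intro k i' b' c'
    obtain ⟨h1, h2, h3, h4⟩ := delta_bound M i' b' c'
    have h1' : (-1:ℝ) ≤ ((M.Γ i' b' c').2.1 : ℝ) := by exact_mod_cast h1
    have h3' : (-1:ℝ) ≤ ((M.Γ i' b' c').2.2 : ℝ) := by exact_mod_cast h3
    split <;> linarith
  -- all C coordinates frozen
  have dC : ∀ k : Fin 2, ∀ s ∈ Icc T (T+1), y s (.C k) - y T (.C k) = 0 := by
    intro k
    have key := freeze_of h (.C k) T (T+1) hT (fun s hs => by
      have e := zid_C h T s hT (hIcc hs) k
      have hC0 : (0:ℝ) ≤ W2 i N₁ N₂ (.C k) := by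
        show (0:ℝ) ≤ if k = 0 then _ else _
        split <;> positivity
      rw [hw (.C k)] at e
      have hS : 0 ≤ ∑ i' : Fin m, ∑ b' : Bool, ∑ c' : Bool,
          ((if k = 0 then ((M.Γ i' b' c').2.1 : ℝ) else ((M.Γ i' b' c').2.2 : ℝ)) + 1)
            * (y s (.E i' b' c') - y T (.E i' b' c')) :=
        sum3_nonneg _ _ (hCcoef k) (fun i' b' c' => hge _ s hs)
      have e0 := dA0 s hs
      have e3 := dA3 s hs
      have hD := hge (.D k) s hs
      linarith)
    intro s hs; rw [key s hs, sub_self]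
  -- D frozen
  have dD : ∀ k : Fin 2, ∀ s ∈ Icc T (T+1), y s (.D k) - y T (.D k) = 0 := by
    intro k
    have key := freeze_of h (.D k) T (T+1) hT (fun s hs => by
      have e := zid_D h T s hT (hIcc hs) k
      have hD0 : W2 i N₁ N₂ (.D k) = 0 := rfl
      rw [hw (.D k), hD0, dA1 s hs, dC k s hs] at e
      linarith)
    intro s hs; rw [key s hs, sub_self]
  -- F frozen
  have dF : ∀ (i' : Fin m) (b' c' : Bool), ∀ s ∈ Icc T (T+1),
      y s (.F i' b' c') - y T (.F i' b' c') = 0 := by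
    intro i' b' c'
    have key := freeze_of h (.F i' b' c') T (T+1) hT (fun s hs => by
      have e := zid_F h T s hT (hIcc hs) i' b' c'
      have hF0 : W2 i N₁ N₂ (.F i' b' c') = 4 + Upsilon i N₁ N₂ i' b' c' := rfl
      rw [hw (.F i' b' c'), hF0, dA0 s hs, dA2 s hs, dA3 s hs, dA4 s hs,
        dB i' s hs, dC 0 s hs, dC 1 s hs] at e
      have hE := hge (.E i' b' c') s hs
      have hup := (upsilon_le i N₁ N₂ i' b' c').2
      have hs2 := hs.2
      cases b' <;> cases c' <;> simp [bnum] at e <;> linarith)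
    intro s hs; rw [key s hs, sub_self]
  -- E: non-matching frozen
  have dEn : ∀ (i' : Fin m) (b' c' : Bool),
      ¬(i' = i ∧ b' = decide (0 < N₁) ∧ c' = decide (0 < N₂)) →
      ∀ s ∈ Icc T (T+1), y s (.E i' b' c') - y T (.E i' b' c') = 0 := by
    intro i' b' c' hnm
    have key := freeze_of h (.E i' b' c') T (T+1) hT (fun s hs => by
      have e := zid_E h T s hT (hIcc hs) i' b' c'
      have hE0 : W2 i N₁ N₂ (.E i' b' c') = 3 + Upsilon i N₁ N₂ i' b' c' := rfl
      rw [hw (.E i' b' c'), hE0, dA0 s hs, dA2 s hs,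
        dB i' s hs, dC 0 s hs, dC 1 s hs] at e
      have hF := hge (.F i' b' c') s hs
      have hup := upsilon_nonmatch i N₁ N₂ i' b' c' hnm
      have hs2 := hs.2
      cases b' <;> cases c' <;> simp [bnum] at e <;> linarith)
    intro s hs; rw [key s hs, sub_self]
  -- E: matching pinned
  have dEm : ∀ s ∈ Icc T (T+1),
      y s (.E i (decide (0 < N₁)) (decide (0 < N₂)))
        - y T (.E i (decide (0 < N₁)) (decide (0 < N₂))) = s - T := by
    have key := pin_of h (.E i (decide (0 < N₁)) (decide (0 < N₂))) T (T+1) 0 1 hT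
      le_rfl zero_le_one (fun s hs => by
      have e := zid_E h T s hT (hIcc hs) i (decide (0 < N₁)) (decide (0 < N₂))
      have hE0 : W2 i N₁ N₂ (.E i (decide (0 < N₁)) (decide (0 < N₂)))
          = 3 + Upsilon i N₁ N₂ i (decide (0 < N₁)) (decide (0 < N₂)) := rfl
      rw [hw (.E i (decide (0 < N₁)) (decide (0 < N₂))), hE0, upsilon_match,
        dA0 s hs, dA2 s hs, dB i s hs, dC 0 s hs, dC 1 s hs,
        dF i (decide (0 < N₁)) (decide (0 < N₂)) s hs] at e
      rw [e]; ring)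
    intro s hs
    have := key s hs
    rw [this, max_eq_right (by linarith [hs.1])]; ring
  -- increments of all E coordinates
  have dEall : ∀ (i' : Fin m) (b' c' : Bool), ∀ s ∈ Icc T (T+1),
      y s (.E i' b' c') - y T (.E i' b' c')
        = if i' = i ∧ b' = decide (0 < N₁) ∧ c' = decide (0 < N₂) then s - T else 0 := by
    intro i' b' c' s hs
    by_cases hm' : i' = i ∧ b' = decide (0 < N₁) ∧ c' = decide (0 < N₂)
    · obtain ⟨e1, e2, e3⟩ := hm'
      subst e1; subst e2; subst e3
      simp [dEm s hs]
    · simp [hm', dEn i' b' c' hm' s hs]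
  -- E-sums reduce to the matching term
  have hSB : ∀ (j : Fin m), ∀ s ∈ Icc T (T+1),
      (∑ i' : Fin m, ∑ b' : Bool, ∑ c' : Bool,
        (if (M.Γ i' b' c').1 = j then (0:ℝ) else 1)
          * (y s (.E i' b' c') - y T (.E i' b' c'))) =
      (if (M.Γ i (decide (0 < N₁)) (decide (0 < N₂))).1 = j then (0:ℝ) else 1) * (s - T) := by
    intro j s hs
    rw [sum3_single' _ _ i (decide (0 < N₁)) (decide (0 < N₂))
      (fun i' b' c' hnm => dEn i' b' c' hnm s hs)]
    rw [dEm s hs]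
  have hSC : ∀ (k : Fin 2), ∀ s ∈ Icc T (T+1),
      (∑ i' : Fin m, ∑ b' : Bool, ∑ c' : Bool,
        ((if k = 0 then ((M.Γ i' b' c').2.1 : ℝ) else ((M.Γ i' b' c').2.2 : ℝ)) + 1)
          * (y s (.E i' b' c') - y T (.E i' b' c'))) =
      ((if k = 0 then ((M.Γ i (decide (0 < N₁)) (decide (0 < N₂))).2.1 : ℝ)
        else ((M.Γ i (decide (0 < N₁)) (decide (0 < N₂))).2.2 : ℝ)) + 1) * (s - T) := by
    intro k s hs
    rw [sum3_single' _ _ i (decide (0 < N₁)) (decide (0 < N₂))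
      (fun i' b' c' hnm => dEn i' b' c' hnm s hs)]
    rw [dEm s hs]
  -- assemble
  intro p
  rcases p with l | j | k | k | ⟨i', b', c'⟩ | ⟨i', b', c'⟩
  · rw [hAz (T+1) hend l]
    fin_cases l <;> simp [W3] <;> ring
  · have e := zid_B h T (T+1) hT (by linarith) j
    rw [hw (.B j), hSB j (T+1) hend, dB j (T+1) hend, dA0 (T+1) hend, h1T] at e
    rw [e]
    show (0:ℝ) - 0 + 0 + _ * 1 = _
    simp [W3]
  · have e := zid_C h T (T+1) hT (by linarith) k
    rw [hw (.C k), hSC k (T+1) hend, dC k (T+1) hend, dA0 (T+1) hend,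
      dA3 (T+1) hend, dD k (T+1) hend, h1T] at e
    rw [e]
    show _ = W3 M i N₁ N₂ (.C k)
    simp only [W2, W3]
    ring
  · have e := zid_D h T (T+1) hT (by linarith) k
    rw [hw (.D k), dA1 (T+1) hend, dC k (T+1) hend, dD k (T+1) hend] at e
    rw [e]
    show (0:ℝ) - 0 + 0 + 0 = 0
    ring
  · have e := zid_E h T (T+1) hT (by linarith) i' b' c'
    rw [hw (.E i' b' c'), dA0 (T+1) hend, dA2 (T+1) hend, dB i' (T+1) hend,
      dC 0 (T+1) hend, dC 1 (T+1) hend, dEall i' b' c' (T+1) hend,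
      dF i' b' c' (T+1) hend, h1T] at e
    rw [e]
    by_cases hm' : i' = i ∧ b' = decide (0 < N₁) ∧ c' = decide (0 < N₂)
    · obtain ⟨e1, e2, e3⟩ := hm'
      subst e1; subst e2; subst e3
      simp [W2, W3, upsilon_match]
      try ring
    · simp only [W2, W3, if_neg hm']
      ring
  · have e := zid_F h T (T+1) hT (by linarith) i' b' c'
    rw [hw (.F i' b' c'), dA0 (T+1) hend, dA2 (T+1) hend, dA3 (T+1) hend,
      dA4 (T+1) hend, dB i' (T+1) hend, dC 0 (T+1) hend, dC 1 (T+1) hend,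
      dEall i' b' c' (T+1) hend, dF i' b' c' (T+1) hend, h1T] at e
    rw [e]
    by_cases hm' : i' = i ∧ b' = decide (0 < N₁) ∧ c' = decide (0 < N₂)
    · obtain ⟨e1, e2, e3⟩ := hm'
      subst e1; subst e2; subst e3
      simp [W2, W3, upsilon_match]
      try ring
    · simp only [W2, W3, if_neg hm']
      ring

lemma count_nonneg (M : CounterMachine m) (i : Fin m) (N₁ N₂ : ℕ) :
    (0:ℝ) ≤ (N₁:ℝ) + ((M.Γ i (decide (0 < N₁)) (decide (0 < N₂))).2.1 : ℝ) ∧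
    (0:ℝ) ≤ (N₂:ℝ) + ((M.Γ i (decide (0 < N₁)) (decide (0 < N₂))).2.2 : ℝ) := by
  obtain ⟨h1, h2, h3, h4⟩ := delta_bound M i (decide (0 < N₁)) (decide (0 < N₂))
  have h1' : (-1:ℝ) ≤ ((M.Γ i (decide (0 < N₁)) (decide (0 < N₂))).2.1 : ℝ) := by exact_mod_cast h1
  have h3' : (-1:ℝ) ≤ ((M.Γ i (decide (0 < N₁)) (decide (0 < N₂))).2.2 : ℝ) := by exact_mod_cast h3
  constructor
  · by_cases hN : N₁ = 0
    · have hb : decide (0 < N₁) = false := by simp [hN]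
      have := (M.consistent i (decide (0 < N₁)) (decide (0 < N₂))).1 hb
      have : (0:ℝ) ≤ ((M.Γ i (decide (0 < N₁)) (decide (0 < N₂))).2.1 : ℝ) := by exact_mod_cast this
      positivity
    · have : (1:ℝ) ≤ (N₁:ℝ) := by exact_mod_cast Nat.one_le_iff_ne_zero.mpr hN
      linarith
  · by_cases hN : N₂ = 0
    · have hb : decide (0 < N₂) = false := by simp [hN]
      have := (M.consistent i (decide (0 < N₁)) (decide (0 < N₂))).2 hb
      have : (0:ℝ) ≤ ((M.Γ i (decide (0 < N₁)) (decide (0 < N₂))).2.2 : ℝ) := by exact_mod_cast this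
      positivity
    · have : (1:ℝ) ≤ (N₂:ℝ) := by exact_mod_cast Nat.one_le_iff_ne_zero.mpr hN
      linarith

/-- configuration data after phase 4 -/
def W4 {m : ℕ} (M : CounterMachine m) (i : Fin m) (N₁ N₂ : ℕ) : Idx m → ℝ := fun p =>
  match p with
  | .A l => ![1,1,1,0,0] l
  | .B j => if (M.Γ i (decide (0 < N₁)) (decide (0 < N₂))).1 = j then 0 else 1
  | .C k => (if k = 0 then (N₁:ℝ) else (N₂:ℝ))
      + (if k = 0 then ((M.Γ i (decide (0 < N₁)) (decide (0 < N₂))).2.1:ℝ)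
         else ((M.Γ i (decide (0 < N₁)) (decide (0 < N₂))).2.2:ℝ))
  | .D _ => 0
  | .E _ _ _ => 3
  | .F _ _ _ => 0

lemma phase4 (h : IsSkorokhodSolution (Rmat M) (fluidX i0 C₁ C₂) y z)
    (i : Fin m) (N₁ N₂ : ℕ) (T : ℝ) (hT : 0 ≤ T)
    (hw : ∀ p, z T p = W3 M i N₁ N₂ p) :
    ∀ p, z (T+1) p = W4 M i N₁ N₂ p := by
  have hIcc : ∀ {s : ℝ}, s ∈ Icc T (T+1) → 0 ≤ s := fun hs => hT.trans hs.1
  have hge : ∀ (q : Idx m), ∀ s ∈ Icc T (T+1), 0 ≤ y s q - y T q :=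
    fun q s hs => sol_nonneg_inc h q hT hs.1
  have hend : T + 1 ∈ Icc T (T+1) := ⟨by linarith, le_rfl⟩
  have h1T : (T + 1 - T) = (1:ℝ) := by ring
  obtain ⟨hAinc, hAz⟩ := phaseA3 h T hT (fun l => by
    fin_cases l <;> simp [hw, W3])
  have dA0 : ∀ s ∈ Icc T (T+1), y s (.A 0) - y T (.A 0) = 0 :=
    fun s hs => by simpa using hAinc s hs 0
  have dA1 : ∀ s ∈ Icc T (T+1), y s (.A 1) - y T (.A 1) = 0 :=
    fun s hs => by simpa using hAinc s hs 1
  have dA2 : ∀ s ∈ Icc T (T+1), y s (.A 2) - y T (.A 2) = 0 :=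
    fun s hs => by simpa using hAinc s hs 2
  have dA3 : ∀ s ∈ Icc T (T+1), y s (.A 3) - y T (.A 3) = s - T :=
    fun s hs => by simpa using hAinc s hs 3
  have dA4 : ∀ s ∈ Icc T (T+1), y s (.A 4) - y T (.A 4) = 0 :=
    fun s hs => by simpa using hAinc s hs 4
  -- all B coordinates frozen
  have dB : ∀ j : Fin m, ∀ s ∈ Icc T (T+1), y s (.B j) - y T (.B j) = 0 := by
    intro j
    have key := freeze_of h (.B j) T (T+1) hT (fun s hs => by
      have e := zid_B h T s hT (hIcc hs) j
      have hB0 : (0:ℝ) ≤ W3 M i N₁ N₂ (.B j) := by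
        show (0:ℝ) ≤ if _ then _ else _
        split <;> norm_num
      rw [hw (.B j)] at e
      have hS : 0 ≤ ∑ i' : Fin m, ∑ b' : Bool, ∑ c' : Bool,
          (if (M.Γ i' b' c').1 = j then (0:ℝ) else 1)
            * (y s (.E i' b' c') - y T (.E i' b' c')) :=
        sum3_nonneg _ _ (fun i' b' c' => by split <;> norm_num)
          (fun i' b' c' => hge _ s hs)
      have e0 := dA0 s hs
      linarith)
    intro s hs; rw [key s hs, sub_self]
  have hCcoef : ∀ (k : Fin 2) (i' : Fin m) (b' c' : Bool),
      (0:ℝ) ≤ (if k = 0 then ((M.Γ i' b' c').2.1 : ℝ) else ((M.Γ i' b' c').2.2 : ℝ)) + 1 := by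
    intro k i' b' c'
    obtain ⟨h1, h2, h3, h4⟩ := delta_bound M i' b' c'
    have h1' : (-1:ℝ) ≤ ((M.Γ i' b' c').2.1 : ℝ) := by exact_mod_cast h1
    have h3' : (-1:ℝ) ≤ ((M.Γ i' b' c').2.2 : ℝ) := by exact_mod_cast h3
    split <;> linarith
  -- all C coordinates frozen
  have dC : ∀ k : Fin 2, ∀ s ∈ Icc T (T+1), y s (.C k) - y T (.C k) = 0 := by
    intro k
    have key := freeze_of h (.C k) T (T+1) hT (fun s hs => by
      have e := zid_C h T s hT (hIcc hs) k
      have hC1 : (1:ℝ) ≤ W3 M i N₁ N₂ (.C k) := by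
        show (1:ℝ) ≤ _ + _ + 1
        rcases count_nonneg M i N₁ N₂ with ⟨hc1, hc2⟩
        by_cases hk : k = 0 <;> simp only [hk, if_true, if_false] <;> linarith
      rw [hw (.C k)] at e
      have hS : 0 ≤ ∑ i' : Fin m, ∑ b' : Bool, ∑ c' : Bool,
          ((if k = 0 then ((M.Γ i' b' c').2.1 : ℝ) else ((M.Γ i' b' c').2.2 : ℝ)) + 1)
            * (y s (.E i' b' c') - y T (.E i' b' c')) :=
        sum3_nonneg _ _ (hCcoef k) (fun i' b' c' => hge _ s hs)
      have e0 := dA0 s hs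
      have e3 := dA3 s hs
      have hD := hge (.D k) s hs
      have hs2 := hs.2
      linarith)
    intro s hs; rw [key s hs, sub_self]
  -- D frozen
  have dD : ∀ k : Fin 2, ∀ s ∈ Icc T (T+1), y s (.D k) - y T (.D k) = 0 := by
    intro k
    have key := freeze_of h (.D k) T (T+1) hT (fun s hs => by
      have e := zid_D h T s hT (hIcc hs) k
      have hD0 : W3 M i N₁ N₂ (.D k) = 0 := rfl
      rw [hw (.D k), hD0, dA1 s hs, dC k s hs] at e
      linarith)
    intro s hs; rw [key s hs, sub_self]
  -- all E coordinates frozen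
  have dE : ∀ (i' : Fin m) (b' c' : Bool), ∀ s ∈ Icc T (T+1),
      y s (.E i' b' c') - y T (.E i' b' c') = 0 := by
    intro i' b' c'
    have key := freeze_of h (.E i' b' c') T (T+1) hT (fun s hs => by
      have e := zid_E h T s hT (hIcc hs) i' b' c'
      have hE0 : (0:ℝ) ≤ W3 M i N₁ N₂ (.E i' b' c') := by
        show (0:ℝ) ≤ if _ then _ else _
        by_cases hm' : i' = i ∧ b' = decide (0 < N₁) ∧ c' = decide (0 < N₂)
        · rw [if_pos hm']
        · rw [if_neg hm']
          have := upsilon_nonmatch i N₁ N₂ i' b' c' hm'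
          linarith
      rw [hw (.E i' b' c'), dA0 s hs, dA2 s hs, dB i' s hs, dC 0 s hs, dC 1 s hs] at e
      have hF := hge (.F i' b' c') s hs
      ring_nf at e
      try linarith
      try cases b' <;> cases c' <;> simp [bnum] at e <;> linarith)
    intro s hs; rw [key s hs, sub_self]
  -- F pinned
  have dF : ∀ (i' : Fin m) (b' c' : Bool), ∀ s ∈ Icc T (T+1),
      y s (.F i' b' c') - y T (.F i' b' c')
        = max 0 (4 * (s - T) - W3 M i N₁ N₂ (.F i' b' c')) := by
    intro i' b' c'
    have hF0 : (0:ℝ) ≤ W3 M i N₁ N₂ (.F i' b' c') := by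
      show (0:ℝ) ≤ if _ then _ else _
      by_cases hm' : i' = i ∧ b' = decide (0 < N₁) ∧ c' = decide (0 < N₂)
      · rw [if_pos hm']; norm_num
      · rw [if_neg hm']
        have := upsilon_nonmatch i N₁ N₂ i' b' c' hm'
        linarith
    have key := pin_of h (.F i' b' c') T (T+1) (W3 M i N₁ N₂ (.F i' b' c')) 4 hT hF0
      (by norm_num) (fun s hs => by
      have e := zid_F h T s hT (hIcc hs) i' b' c'
      rw [hw (.F i' b' c'), dA0 s hs, dA2 s hs, dA3 s hs, dA4 s hs, dB i' s hs,
        dC 0 s hs, dC 1 s hs, dE i' b' c' s hs] at e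
      rw [e]; ring)
    exact key
  -- E-sums vanish
  have hSB : ∀ (j : Fin m), ∀ s ∈ Icc T (T+1),
      (∑ i' : Fin m, ∑ b' : Bool, ∑ c' : Bool,
        (if (M.Γ i' b' c').1 = j then (0:ℝ) else 1)
          * (y s (.E i' b' c') - y T (.E i' b' c'))) = 0 :=
    fun j s hs => sum3_zero' _ (fun i' b' c' => by rw [dE i' b' c' s hs, mul_zero])
  have hSC : ∀ (k : Fin 2), ∀ s ∈ Icc T (T+1),
      (∑ i' : Fin m, ∑ b' : Bool, ∑ c' : Bool,
        ((if k = 0 then ((M.Γ i' b' c').2.1 : ℝ) else ((M.Γ i' b' c').2.2 : ℝ)) + 1)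
          * (y s (.E i' b' c') - y T (.E i' b' c'))) = 0 :=
    fun k s hs => sum3_zero' _ (fun i' b' c' => by rw [dE i' b' c' s hs, mul_zero])
  -- assemble
  intro p
  rcases p with l | j | k | k | ⟨i', b', c'⟩ | ⟨i', b', c'⟩
  · rw [hAz (T+1) hend l]
    fin_cases l <;> simp [W4] <;> ring
  · have e := zid_B h T (T+1) hT (by linarith) j
    rw [hw (.B j), hSB j (T+1) hend, dB j (T+1) hend, dA0 (T+1) hend] at e
    rw [e]
    show W3 M i N₁ N₂ (.B j) - 0 + 0 + 0 = W4 M i N₁ N₂ (.B j)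
    simp only [W3, W4]
    ring
  · have e := zid_C h T (T+1) hT (by linarith) k
    rw [hw (.C k), hSC k (T+1) hend, dC k (T+1) hend, dA0 (T+1) hend,
      dA3 (T+1) hend, dD k (T+1) hend, h1T] at e
    rw [e]
    show _ = W4 M i N₁ N₂ (.C k)
    simp only [W3, W4]
    ring
  · have e := zid_D h T (T+1) hT (by linarith) k
    rw [hw (.D k), dA1 (T+1) hend, dC k (T+1) hend, dD k (T+1) hend] at e
    rw [e]
    show (0:ℝ) - 0 + 0 + 0 = 0
    ring
  · have e := zid_E h T (T+1) hT (by linarith) i' b' c'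
    rw [hw (.E i' b' c'), dA0 (T+1) hend, dA2 (T+1) hend, dB i' (T+1) hend,
      dC 0 (T+1) hend, dC 1 (T+1) hend, dE i' b' c' (T+1) hend,
      dF i' b' c' (T+1) hend, h1T] at e
    rw [e]
    show _ = (3:ℝ)
    by_cases hm' : i' = i ∧ b' = decide (0 < N₁) ∧ c' = decide (0 < N₂)
    · simp only [W3, if_pos hm']
      rw [max_eq_right (by norm_num)]
      ring
    · simp only [W3, if_neg hm']
      have hu1 := (upsilon_le i N₁ N₂ i' b' c').1
      rw [max_eq_right (by linarith)]
      ring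
  · have e := zid_F h T (T+1) hT (by linarith) i' b' c'
    rw [hw (.F i' b' c'), dA0 (T+1) hend, dA2 (T+1) hend, dA3 (T+1) hend,
      dA4 (T+1) hend, dB i' (T+1) hend, dC 0 (T+1) hend, dC 1 (T+1) hend,
      dE i' b' c' (T+1) hend, dF i' b' c' (T+1) hend, h1T] at e
    rw [e]
    show _ = (0:ℝ)
    by_cases hm' : i' = i ∧ b' = decide (0 < N₁) ∧ c' = decide (0 < N₂)
    · simp only [W3, if_pos hm']
      rw [max_eq_right (by norm_num)]
      ring
    · simp only [W3, if_neg hm']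
      have hu1 := (upsilon_le i N₁ N₂ i' b' c').1
      rw [max_eq_right (by linarith)]
      ring

/-- configuration data after phase 5 -/
def W5 {m : ℕ} (M : CounterMachine m) (i : Fin m) (N₁ N₂ : ℕ) : Idx m → ℝ := fun p =>
  match p with
  | .A l => ![0,1,1,1,0] l
  | .B j => if (M.Γ i (decide (0 < N₁)) (decide (0 < N₂))).1 = j then 0 else 1
  | .C k => (if k = 0 then (N₁:ℝ) else (N₂:ℝ))
      + (if k = 0 then ((M.Γ i (decide (0 < N₁)) (decide (0 < N₂))).2.1:ℝ)
         else ((M.Γ i (decide (0 < N₁)) (decide (0 < N₂))).2.2:ℝ))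
  | .D _ => 0
  | .E _ _ _ => 3
  | .F _ _ _ => 4

lemma phase5 (h : IsSkorokhodSolution (Rmat M) (fluidX i0 C₁ C₂) y z)
    (i : Fin m) (N₁ N₂ : ℕ) (T : ℝ) (hT : 0 ≤ T)
    (hw : ∀ p, z T p = W4 M i N₁ N₂ p) :
    ∀ p, z (T+1) p = W5 M i N₁ N₂ p := by
  have hIcc : ∀ {s : ℝ}, s ∈ Icc T (T+1) → 0 ≤ s := fun hs => hT.trans hs.1
  have hge : ∀ (q : Idx m), ∀ s ∈ Icc T (T+1), 0 ≤ y s q - y T q :=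
    fun q s hs => sol_nonneg_inc h q hT hs.1
  have hend : T + 1 ∈ Icc T (T+1) := ⟨by linarith, le_rfl⟩
  have h1T : (T + 1 - T) = (1:ℝ) := by ring
  obtain ⟨hAinc, hAz⟩ := phaseA4 h T hT (fun l => by
    fin_cases l <;> simp [hw, W4])
  have dA0 : ∀ s ∈ Icc T (T+1), y s (.A 0) - y T (.A 0) = 0 :=
    fun s hs => by simpa using hAinc s hs 0
  have dA1 : ∀ s ∈ Icc T (T+1), y s (.A 1) - y T (.A 1) = 0 :=
    fun s hs => by simpa using hAinc s hs 1
  have dA2 : ∀ s ∈ Icc T (T+1), y s (.A 2) - y T (.A 2) = 0 :=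
    fun s hs => by simpa using hAinc s hs 2
  have dA3 : ∀ s ∈ Icc T (T+1), y s (.A 3) - y T (.A 3) = 0 :=
    fun s hs => by simpa using hAinc s hs 3
  have dA4 : ∀ s ∈ Icc T (T+1), y s (.A 4) - y T (.A 4) = s - T :=
    fun s hs => by simpa using hAinc s hs 4
  -- all B coordinates frozen
  have dB : ∀ j : Fin m, ∀ s ∈ Icc T (T+1), y s (.B j) - y T (.B j) = 0 := by
    intro j
    have key := freeze_of h (.B j) T (T+1) hT (fun s hs => by
      have e := zid_B h T s hT (hIcc hs) j
      have hB0 : (0:ℝ) ≤ W4 M i N₁ N₂ (.B j) := by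
        show (0:ℝ) ≤ if _ then _ else _
        split <;> norm_num
      rw [hw (.B j)] at e
      have hS : 0 ≤ ∑ i' : Fin m, ∑ b' : Bool, ∑ c' : Bool,
          (if (M.Γ i' b' c').1 = j then (0:ℝ) else 1)
            * (y s (.E i' b' c') - y T (.E i' b' c')) :=
        sum3_nonneg _ _ (fun i' b' c' => by split <;> norm_num)
          (fun i' b' c' => hge _ s hs)
      have e0 := dA0 s hs
      linarith)
    intro s hs; rw [key s hs, sub_self]
  have hCcoef : ∀ (k : Fin 2) (i' : Fin m) (b' c' : Bool),
      (0:ℝ) ≤ (if k = 0 then ((M.Γ i' b' c').2.1 : ℝ) else ((M.Γ i' b' c').2.2 : ℝ)) + 1 := by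
    intro k i' b' c'
    obtain ⟨h1, h2, h3, h4⟩ := delta_bound M i' b' c'
    have h1' : (-1:ℝ) ≤ ((M.Γ i' b' c').2.1 : ℝ) := by exact_mod_cast h1
    have h3' : (-1:ℝ) ≤ ((M.Γ i' b' c').2.2 : ℝ) := by exact_mod_cast h3
    split <;> linarith
  -- all C coordinates frozen
  have dC : ∀ k : Fin 2, ∀ s ∈ Icc T (T+1), y s (.C k) - y T (.C k) = 0 := by
    intro k
    have key := freeze_of h (.C k) T (T+1) hT (fun s hs => by
      have e := zid_C h T s hT (hIcc hs) k
      have hC0 : (0:ℝ) ≤ W4 M i N₁ N₂ (.C k) := by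
        show (0:ℝ) ≤ _ + _
        rcases count_nonneg M i N₁ N₂ with ⟨hc1, hc2⟩
        by_cases hk : k = 0 <;> simp only [hk, if_true, if_false] <;> linarith
      rw [hw (.C k)] at e
      have hS : 0 ≤ ∑ i' : Fin m, ∑ b' : Bool, ∑ c' : Bool,
          ((if k = 0 then ((M.Γ i' b' c').2.1 : ℝ) else ((M.Γ i' b' c').2.2 : ℝ)) + 1)
            * (y s (.E i' b' c') - y T (.E i' b' c')) :=
        sum3_nonneg _ _ (hCcoef k) (fun i' b' c' => hge _ s hs)
      have e0 := dA0 s hs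
      have e3 := dA3 s hs
      have hD := hge (.D k) s hs
      linarith)
    intro s hs; rw [key s hs, sub_self]
  -- D frozen
  have dD : ∀ k : Fin 2, ∀ s ∈ Icc T (T+1), y s (.D k) - y T (.D k) = 0 := by
    intro k
    have key := freeze_of h (.D k) T (T+1) hT (fun s hs => by
      have e := zid_D h T s hT (hIcc hs) k
      have hD0 : W4 M i N₁ N₂ (.D k) = 0 := rfl
      rw [hw (.D k), hD0, dA1 s hs, dC k s hs] at e
      linarith)
    intro s hs; rw [key s hs, sub_self]
  -- F frozen
  have dF : ∀ (i' : Fin m) (b' c' : Bool), ∀ s ∈ Icc T (T+1),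
      y s (.F i' b' c') - y T (.F i' b' c') = 0 := by
    intro i' b' c'
    have key := freeze_of h (.F i' b' c') T (T+1) hT (fun s hs => by
      have e := zid_F h T s hT (hIcc hs) i' b' c'
      have hF0 : W4 M i N₁ N₂ (.F i' b' c') = 0 := rfl
      rw [hw (.F i' b' c'), hF0, dA0 s hs, dA2 s hs, dA3 s hs, dA4 s hs,
        dB i' s hs, dC 0 s hs, dC 1 s hs] at e
      have hE := hge (.E i' b' c') s hs
      have hs1 := hs.1
      ring_nf at e
      try linarith
      try cases b' <;> cases c' <;> simp [bnum] at e <;> linarith)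
    intro s hs; rw [key s hs, sub_self]
  -- E frozen
  have dE : ∀ (i' : Fin m) (b' c' : Bool), ∀ s ∈ Icc T (T+1),
      y s (.E i' b' c') - y T (.E i' b' c') = 0 := by
    intro i' b' c'
    have key := freeze_of h (.E i' b' c') T (T+1) hT (fun s hs => by
      have e := zid_E h T s hT (hIcc hs) i' b' c'
      have hE0 : W4 M i N₁ N₂ (.E i' b' c') = 3 := rfl
      rw [hw (.E i' b' c'), hE0, dA0 s hs, dA2 s hs, dB i' s hs,
        dC 0 s hs, dC 1 s hs] at e
      have hF := hge (.F i' b' c') s hs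
      ring_nf at e
      try linarith
      try cases b' <;> cases c' <;> simp [bnum] at e <;> linarith)
    intro s hs; rw [key s hs, sub_self]
  -- E-sums vanish
  have hSB : ∀ (j : Fin m), ∀ s ∈ Icc T (T+1),
      (∑ i' : Fin m, ∑ b' : Bool, ∑ c' : Bool,
        (if (M.Γ i' b' c').1 = j then (0:ℝ) else 1)
          * (y s (.E i' b' c') - y T (.E i' b' c'))) = 0 :=
    fun j s hs => sum3_zero' _ (fun i' b' c' => by rw [dE i' b' c' s hs, mul_zero])
  have hSC : ∀ (k : Fin 2), ∀ s ∈ Icc T (T+1),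
      (∑ i' : Fin m, ∑ b' : Bool, ∑ c' : Bool,
        ((if k = 0 then ((M.Γ i' b' c').2.1 : ℝ) else ((M.Γ i' b' c').2.2 : ℝ)) + 1)
          * (y s (.E i' b' c') - y T (.E i' b' c'))) = 0 :=
    fun k s hs => sum3_zero' _ (fun i' b' c' => by rw [dE i' b' c' s hs, mul_zero])
  -- assemble
  intro p
  rcases p with l | j | k | k | ⟨i', b', c'⟩ | ⟨i', b', c'⟩
  · rw [hAz (T+1) hend l]
    fin_cases l <;> simp [W5] <;> ring
  · have e := zid_B h T (T+1) hT (by linarith) j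
    rw [hw (.B j), hSB j (T+1) hend, dB j (T+1) hend, dA0 (T+1) hend] at e
    rw [e]
    show W4 M i N₁ N₂ (.B j) - 0 + 0 + 0 = W5 M i N₁ N₂ (.B j)
    simp only [W4, W5]
    ring
  · have e := zid_C h T (T+1) hT (by linarith) k
    rw [hw (.C k), hSC k (T+1) hend, dC k (T+1) hend, dA0 (T+1) hend,
      dA3 (T+1) hend, dD k (T+1) hend] at e
    rw [e]
    show _ = W5 M i N₁ N₂ (.C k)
    simp only [W4, W5]
    ring
  · have e := zid_D h T (T+1) hT (by linarith) k
    rw [hw (.D k), dA1 (T+1) hend, dC k (T+1) hend, dD k (T+1) hend] at e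
    rw [e]
    show (0:ℝ) - 0 + 0 + 0 = 0
    ring
  · have e := zid_E h T (T+1) hT (by linarith) i' b' c'
    rw [hw (.E i' b' c'), dA0 (T+1) hend, dA2 (T+1) hend, dB i' (T+1) hend,
      dC 0 (T+1) hend, dC 1 (T+1) hend, dE i' b' c' (T+1) hend,
      dF i' b' c' (T+1) hend] at e
    rw [e]
    show _ = (3:ℝ)
    simp only [W4]
    ring
  · have e := zid_F h T (T+1) hT (by linarith) i' b' c'
    rw [hw (.F i' b' c'), dA0 (T+1) hend, dA2 (T+1) hend, dA3 (T+1) hend,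
      dA4 (T+1) hend, dB i' (T+1) hend, dC 0 (T+1) hend, dC 1 (T+1) hend,
      dE i' b' c' (T+1) hend, dF i' b' c' (T+1) hend, h1T] at e
    rw [e]
    show _ = (4:ℝ)
    simp only [W4]
    ring

end Phases
section Main
open Set Finset
variable {m : ℕ} {M : CounterMachine m} {i0 : Fin m} {C₁ C₂ : ℕ} {y z : ℝ → Idx m → ℝ}

lemma W5_eq_enc (M : CounterMachine m) (i : Fin m) (N₁ N₂ : ℕ) :
    ∀ p, W5 M i N₁ N₂ p
      = encCfg (M.step (i, N₁, N₂)).1 (M.step (i, N₁, N₂)).2.1 (M.step (i, N₁, N₂)).2.2 p := by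
  obtain ⟨hb1, hb2, hb3, hb4⟩ := delta_bound M i (decide (0 < N₁)) (decide (0 < N₂))
  have hZ1 : (0:ℤ) ≤ (N₁:ℤ) + (M.Γ i (decide (0 < N₁)) (decide (0 < N₂))).2.1 := by
    by_cases hN : N₁ = 0
    · have hb : decide (0 < N₁) = false := by simp [hN]
      have := (M.consistent i (decide (0 < N₁)) (decide (0 < N₂))).1 hb
      omega
    · have : 1 ≤ N₁ := Nat.one_le_iff_ne_zero.mpr hN
      omega
  have hZ2 : (0:ℤ) ≤ (N₂:ℤ) + (M.Γ i (decide (0 < N₁)) (decide (0 < N₂))).2.2 := by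
    by_cases hN : N₂ = 0
    · have hb : decide (0 < N₂) = false := by simp [hN]
      have := (M.consistent i (decide (0 < N₁)) (decide (0 < N₂))).2 hb
      omega
    · have : 1 ≤ N₂ := Nat.one_le_iff_ne_zero.mpr hN
      omega
  have c1 : ((((N₁:ℤ) + (M.Γ i (decide (0 < N₁)) (decide (0 < N₂))).2.1).toNat : ℕ):ℝ)
      = (N₁:ℝ) + ((M.Γ i (decide (0 < N₁)) (decide (0 < N₂))).2.1 : ℝ) := by
    have h := Int.toNat_of_nonneg hZ1
    exact_mod_cast congrArg (Int.cast : ℤ → ℝ) h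
  have c2 : ((((N₂:ℤ) + (M.Γ i (decide (0 < N₁)) (decide (0 < N₂))).2.2).toNat : ℕ):ℝ)
      = (N₂:ℝ) + ((M.Γ i (decide (0 < N₁)) (decide (0 < N₂))).2.2 : ℝ) := by
    have h := Int.toNat_of_nonneg hZ2
    exact_mod_cast congrArg (Int.cast : ℤ → ℝ) h
  intro p
  rcases p with l | j | k | k | ⟨i', b', c'⟩ | ⟨i', b', c'⟩
  · simp only [CounterMachine.step, encCfg, W5]
    fin_cases l <;> simp
  · simp only [CounterMachine.step, encCfg, W5]
    by_cases hj : j = (M.Γ i (decide (0 < N₁)) (decide (0 < N₂))).1 <;>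
      simp [hj, eq_comm]
  · simp only [CounterMachine.step, encCfg, W5]
    by_cases hk : k = 0 <;> simp only [hk, if_true, if_false] <;>
      [exact c1.symm; exact c2.symm]
  · simp [CounterMachine.step, encCfg, W5]
  · simp [CounterMachine.step, encCfg, W5]
  · simp [CounterMachine.step, encCfg, W5]

lemma step_lemma (h : IsSkorokhodSolution (Rmat M) (fluidX i0 C₁ C₂) y z)
    (i : Fin m) (N₁ N₂ : ℕ) (T : ℝ) (hT : 0 ≤ T)
    (hw : ∀ p, z T p = encCfg i N₁ N₂ p) :
    ∀ p, z (T + 5) p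
      = encCfg (M.step (i, N₁, N₂)).1 (M.step (i, N₁, N₂)).2.1 (M.step (i, N₁, N₂)).2.2 p := by
  have h1 := phase1 h i N₁ N₂ T hT hw
  have h2 := phase2 h i N₁ N₂ (T+1) (by linarith) h1
  rw [show T+1+1 = T+2 by ring] at h2
  have h3 := phase3 h i N₁ N₂ (T+2) (by linarith) h2
  rw [show T+2+1 = T+3 by ring] at h3
  have h4 := phase4 h i N₁ N₂ (T+3) (by linarith) h3
  rw [show T+3+1 = T+4 by ring] at h4
  have h5 := phase5 h i N₁ N₂ (T+4) (by linarith) h4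
  rw [show T+4+1 = T+5 by ring] at h5
  intro p
  rw [h5 p, W5_eq_enc M i N₁ N₂ p]

end Main

theorem skorokhod_simulates_counter_machine' {m : ℕ} (M : CounterMachine m)
    (i0 : Fin m) (C₁ C₂ : ℕ) (y z : ℝ → Idx m → ℝ)
    (h : IsSkorokhodSolution (Rmat M) (fluidX i0 C₁ C₂) y z) :
    ∀ t : ℕ,
      z (5 * (t : ℝ)) =
        encCfg ((M.step)^[t] (i0, C₁, C₂)).1
          ((M.step)^[t] (i0, C₁, C₂)).2.1 ((M.step)^[t] (i0, C₁, C₂)).2.2 := by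
  intro t
  induction t with
  | zero =>
    have e := h.2.2.1 0 le_rfl
    have hy0 := h.2.2.2.2.1
    funext p
    simp only [Nat.cast_zero, mul_zero, Function.iterate_zero, id]
    rw [e]
    show fluidX i0 C₁ C₂ 0 p + (Rmat M).mulVec (y 0) p = _
    rw [hy0, Matrix.mulVec_zero]
    simp [fluidX]
  | succ t ih =>
    have hT : (0:ℝ) ≤ 5 * (t:ℝ) := by positivity
    have hw : ∀ p, z (5*(t:ℝ)) p
        = encCfg ((M.step)^[t] (i0, C₁, C₂)).1
            ((M.step)^[t] (i0, C₁, C₂)).2.1 ((M.step)^[t] (i0, C₁, C₂)).2.2 p :=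
      fun p => by rw [ih]
    have key := step_lemma h _ _ _ (5*(t:ℝ)) hT hw
    funext p
    have hcast : (5:ℝ) * ((t+1 : ℕ):ℝ) = 5*(t:ℝ) + 5 := by push_cast; ring
    rw [hcast, key p, Function.iterate_succ_apply']

/-- The Skorokhod problem associated with a consistent counter
machine simulates it: at time `5t`, every Skorokhod solution started from the
encoding of the initial configuration sits at the encoding of the configuration
of the trajectory at time `t`. -/
theorem skorokhod_simulates_counter_machine {m : ℕ} (M : CounterMachine m)
    (i0 : Fin m) (C₁ C₂ : ℕ) (y z : ℝ → Idx m → ℝ)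
    (h : IsSkorokhodSolution (Rmat M) (fluidX i0 C₁ C₂) y z) :
    ∀ t : ℕ,
      z (5 * (t : ℝ)) =
        encCfg ((M.step)^[t] (i0, C₁, C₂)).1
          ((M.step)^[t] (i0, C₁, C₂)).2.1 ((M.step)^[t] (i0, C₁, C₂)).2.2 := skorokhod_simulates_counter_machine' M i0 C₁ C₂ y z h
end

section
/- Let AA be the 5×5 real matrix with rows (1,2,1,1,0), (0,1,2,1,1), (1,0,1,2,1), (1,1,0,1,2), (2,1,1,0,1), and let x : [0,∞) → ℝ⁵ be x(t) = (0,1,1,1,0) − (1,1,1,1,1)·t. Then every Skorokhod solution (y,z) for (AA, x) satisfies, for every t ∈ ℕ: z(5t) = (0,1,1,1,0); for each i ∈ {1,2,3,4}, z_i(5t+i) = z_{i+1}(5t+i) = 0 and z_j(5t+i) = 1 for j ∉ {i,i+1}; and for each i ∈ {0,1,2,3,4}, the coordinate y_{i+1} is active at unit rate on the interval (5t+i, 5t+i+1) and is passive on every interval (5t+j, 5t+j+1) with j ≠ i. In particular z(t) cycles with period 5 through the five vectors (0,1,1,1,0), (0,0,1,1,1), (1,0,0,1,1), (1,1,0,0,1),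 (1,1,1,0,0) at integer times. -/
open scoped BigOperators

section ABaux
open Set Filter Topology Fin.NatCast

def vvAB (i : Fin 5) : Fin 5 → ℝ := fun j => if j = i ∨ j = i - 1 then 0 else 1

lemma AB_entries (i : Fin 5) : AAmat i i = 1 ∧ AAmat i (i+4) = 0 ∧ AAmat (i+4) i = 2
    ∧ AAmat (i+1) i = 0 ∧ AAmat (i+2) i = 1 ∧ AAmat (i+3) i = 1 := by
  fin_cases i <;> exact ⟨rfl, rfl, rfl, rfl, rfl, rfl⟩

lemma AB_vve (i : Fin 5) : vvAB i i = 0 ∧ vvAB i (i+4) = 0 ∧ vvAB i (i+1) = 1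
    ∧ vvAB i (i+2) = 1 ∧ vvAB i (i+3) = 1 := by
  fin_cases i <;> exact ⟨rfl, rfl, rfl, rfl, rfl⟩

lemma AB_vstep (i j : Fin 5) : vvAB i j + 1*(AAmat j i - 1) = vvAB (i+1) j := by
  fin_cases i <;> fin_cases j <;>
    simp (config := { decide := true }) [vvAB, AAmat] <;>
    first | rfl | norm_num [Matrix.vecHead, Matrix.vecTail]

lemma AB_fin5j (i j : Fin 5) (h : j ≠ i) : j = i+1 ∨ j = i+2 ∨ j = i+3 ∨ j = i+4 := by
  revert h; revert i j; decide

lemma AB_ne (i : Fin 5) : i+1 ≠ i ∧ i+2 ≠ i ∧ i+3 ≠ i ∧ i+4 ≠ i := by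
  revert i; decide

lemma AB_vv0 : vvAB 0 = ![0,1,1,1,0] := by funext j; fin_cases j <;> rfl

lemma AB_sum5 (i j : Fin 5) (w : Fin 5 → ℝ) : (∑ k, AAmat j k * w k)
    = AAmat j i * w i + AAmat j (i+1) * w (i+1) + AAmat j (i+2) * w (i+2)
      + AAmat j (i+3) * w (i+3) + AAmat j (i+4) * w (i+4) := by
  rw [← Fintype.sum_equiv (Equiv.addLeft i) (fun m => AAmat j (i+m) * w (i+m))
      (fun k => AAmat j k * w k) (fun m => rfl)]
  simp [Fin.sum_univ_five]

lemma AB_oneD (f g : ℝ → ℝ) (a b : ℝ) (h0a : 0 ≤ a)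
    (hf0 : f a = 0) (hfc : ContinuousOn f (Set.Icc a b))
    (hnn : ∀ s ∈ Set.Icc a b, 0 ≤ f s)
    (hid : ∀ r ∈ Set.Icc a b, ∀ s ∈ Set.Icc a b, r ≤ s → f s - f r = -(s - r) + (g s - g r))
    (hcomp : ∀ s₁ s₂ : ℝ, 0 ≤ s₁ → s₁ ≤ s₂ → (∀ s ∈ Set.Ioo s₁ s₂, 0 < f s) → g s₂ = g s₁) :
    ∀ s ∈ Set.Icc a b, f s = 0 := by
  intro s hs
  by_contra hne
  have hfs : 0 < f s := lt_of_le_of_ne (hnn s hs) (Ne.symm hne)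
  set Z : Set ℝ := {r ∈ Set.Icc a s | f r = 0} with hZ
  have hZne : Z.Nonempty := ⟨a, ⟨le_refl a, hs.1⟩, hf0⟩
  have hZbdd : BddAbove Z := ⟨s, fun r hr => hr.1.2⟩
  have hZclosed : IsClosed Z := by
    have hc : ContinuousOn f (Set.Icc a s) := hfc.mono (Set.Icc_subset_Icc le_rfl hs.2)
    exact hc.preimage_isClosed_of_isClosed isClosed_Icc isClosed_singleton
  set r₀ := sSup Z with hr₀
  have hr₀Z : r₀ ∈ Z := hZclosed.csSup_mem hZne hZbdd
  have hr₀s : r₀ ≤ s := hr₀Z.1.2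
  have har₀ : a ≤ r₀ := hr₀Z.1.1
  have hr₀lt : r₀ < s := lt_of_le_of_ne hr₀s (fun he => hne (he ▸ hr₀Z.2))
  have hpos : ∀ s' ∈ Set.Ioo r₀ s, 0 < f s' := by
    intro s' hs'
    have hmem : s' ∈ Set.Icc a b := ⟨har₀.trans hs'.1.le, hs'.2.le.trans hs.2⟩
    rcases (hnn s' hmem).lt_or_eq with h | h
    · exact h
    · exact absurd (le_csSup hZbdd ⟨⟨har₀.trans hs'.1.le, hs'.2.le⟩, h.symm⟩)
        (not_le.mpr hs'.1)
  have hg : g s = g r₀ := hcomp r₀ s (h0a.trans har₀) hr₀s hpos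
  have := hid r₀ ⟨har₀, hr₀s.trans hs.2⟩ s hs hr₀s
  rw [hg, hr₀Z.2] at this
  linarith

lemma AB_left_lim_eq {f g : ℝ → ℝ} {a : ℝ} (ha : 0 < a)
    (hf : Filter.Tendsto f (nhdsWithin a (Set.Iio a)) (nhds (f a)))
    (hg : Filter.Tendsto g (nhdsWithin a (Set.Iio a)) (nhds (g a)))
    (he : ∀ r ∈ Set.Ioo 0 a, f r = g r) : f a = g a := by
  refine tendsto_nhds_unique (hf.congr' ?_) hg
  filter_upwards [Ioo_mem_nhdsLT_of_mem (show a ∈ Set.Ioc 0 a from ⟨ha, le_refl a⟩)] with r hr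
  exact he r hr

lemma AB_tendsto_left {y : ℝ → Fin 5 → ℝ} (hy : ContinuousOn y (Set.Ici 0))
    (T : ℝ) (hT : 0 ≤ T) (u₀ : ℝ) (hu : 0 < u₀) (j : Fin 5) :
    Filter.Tendsto (fun u => y (T+u) j) (nhdsWithin u₀ (Set.Iio u₀)) (nhds (y (T+u₀) j)) := by
  have h1 : Filter.Tendsto (fun u : ℝ => T + u) (nhdsWithin u₀ (Set.Iio u₀))
      (nhdsWithin (T+u₀) (Set.Ici 0)) := by
    rw [tendsto_nhdsWithin_iff]
    constructor
    · exact ((continuous_const.add continuous_id).tendsto u₀).mono_left nhdsWithin_le_nhds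
    · filter_upwards [Ioo_mem_nhdsLT_of_mem (show u₀ ∈ Set.Ioc 0 u₀ from ⟨hu, le_refl u₀⟩)]
        with r hr
      exact add_nonneg hT hr.1.le
  have h2 := (hy.continuousWithinAt (show T + u₀ ∈ Set.Ici 0 from add_nonneg hT hu.le)).tendsto
  exact ((continuous_apply j).tendsto _).comp (h2.comp h1)

lemma AB_pos_extend {z : ℝ → Fin 5 → ℝ} (hzc : ContinuousOn z (Set.Ici 0))
    (a : ℝ) (ha : 0 ≤ a) (j : Fin 5) (hpos : 0 < z a j) :
    ∃ ε > 0, ∀ s ∈ Set.Icc a (a+ε), 0 < z s j := by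
  have hc : ContinuousWithinAt (fun s => z s j) (Set.Ici 0) a :=
    ((continuous_apply j).comp_continuousOn hzc).continuousWithinAt ha
  have hev : ∀ᶠ s in nhdsWithin a (Set.Ici 0), 0 < z s j := hc.eventually_const_lt hpos
  rw [Filter.eventually_iff, Metric.mem_nhdsWithin_iff] at hev
  obtain ⟨ε, hε, hsub⟩ := hev
  refine ⟨ε/2, by linarith, fun s hs => ?_⟩
  refine hsub ⟨?_, ha.trans hs.1⟩
  rw [Metric.mem_ball, Real.dist_eq, abs_lt]
  constructor <;> [linarith [hs.1]; linarith [hs.2]]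

lemma AB_idz {y z : ℝ → Fin 5 → ℝ}
    (h : IsSkorokhodSolution AAmat (fun t k => (![0, 1, 1, 1, 0] : Fin 5 → ℝ) k - t) y z)
    (T : ℝ) (hT : 0 ≤ T) (i : Fin 5) (hzT : z T = vvAB i) :
    ∀ s : ℝ, 0 ≤ s → ∀ j, z (T+s) j
      = vvAB i j - s + ∑ k, AAmat j k * (y (T+s) k - y T k) := by
  obtain ⟨hyc, hzc, hzx, hzn, hy0, hmono, hcomp⟩ := h
  have e1 : ∀ t : ℝ, 0 ≤ t → ∀ j, z t j
      = (![0, 1, 1, 1, 0] : Fin 5 → ℝ) j - t + ∑ k, AAmat j k * y t k := by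
    intro t ht j
    have := congrFun (hzx t ht) j
    simpa [Matrix.mulVec, dotProduct] using this
  intro s hs j
  have h1 := e1 (T+s) (by linarith) j
  have h2 := e1 T hT j
  rw [hzT] at h2
  have h3 : ∑ k, AAmat j k * (y (T+s) k - y T k)
      = (∑ k, AAmat j k * y (T+s) k) - ∑ k, AAmat j k * y T k := by
    rw [← Finset.sum_sub_distrib]
    exact Finset.sum_congr rfl (fun k _ => by ring)
  rw [h3]
  linarith [h1, h2]

lemma AB_step {y z : ℝ → Fin 5 → ℝ}
    (h : IsSkorokhodSolution AAmat (fun t k => (![0, 1, 1, 1, 0] : Fin 5 → ℝ) k - t) y z)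
    (T : ℝ) (hT : 0 ≤ T) (i : Fin 5) (hzT : z T = vvAB i) :
    ∀ u ∈ Set.Icc (0:ℝ) 1,
      (∀ j, j ≠ i → y (T + u) j = y T j) ∧ y (T + u) i = y T i + u := by
  have idz := AB_idz h T hT i hzT
  obtain ⟨hyc, hzc, hzx, hzn, hy0, hmono, hcomp⟩ := h
  -- main reduction: if the three coords i+1,i+2,i+3 are constant on [0,b], claims hold on [0,b]
  have main : ∀ b : ℝ, 0 ≤ b → b ≤ 1 →
      (∀ r : ℝ, 0 ≤ r → r ≤ b →
        y (T+r) (i+1) = y T (i+1) ∧ y (T+r) (i+2) = y T (i+2) ∧ y (T+r) (i+3) = y T (i+3)) →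
      ∀ r : ℝ, 0 ≤ r → r ≤ b →
        (∀ j, j ≠ i → y (T + r) j = y T j) ∧ y (T + r) i = y T i + r := by
    intro b hb0 hb1 h3c
    have hid2 : ∀ r : ℝ, 0 ≤ r → r ≤ b → ∀ j, z (T+r) j
        = vvAB i j - r + AAmat j i * (y (T+r) i - y T i)
          + AAmat j (i+4) * (y (T+r) (i+4) - y T (i+4)) := by
      intro r h0 h1 j
      have hh := idz r h0 j
      rw [AB_sum5 i j] at hh
      rw [(h3c r h0 h1).1, (h3c r h0 h1).2.1, (h3c r h0 h1).2.2] at hh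
      rw [hh]; ring
    have hz0 : ∀ s ∈ Set.Icc T (T+b), z s i = 0 := by
      apply AB_oneD (fun s => z s i) (fun s => y s i) T (T+b) hT
      · show z T i = 0
        rw [hzT]; exact (AB_vve i).1
      · exact (continuous_apply i).comp_continuousOn
          (hzc.mono (fun x hx => le_trans hT hx.1))
      · intro s hs; exact hzn s (hT.trans hs.1) i
      · intro r hr s hs hrs
        have h1 := hid2 (r - T) (by linarith [hr.1]) (by linarith [hr.2]) i
        have h2 := hid2 (s - T) (by linarith [hs.1]) (by linarith [hs.2]) i
        rw [show T + (r - T) = r by ring] at h1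
        rw [show T + (s - T) = s by ring] at h2
        rw [(AB_entries i).1, (AB_entries i).2.1] at h1 h2
        rw [h1, h2]; ring
      · exact hcomp i
    have alpha : ∀ r : ℝ, 0 ≤ r → r ≤ b → y (T+r) i = y T i + r := by
      intro r h0 h1
      have h2 := hid2 r h0 h1 i
      rw [(AB_entries i).1, (AB_entries i).2.1, (AB_vve i).1] at h2
      have h4 := hz0 (T+r) ⟨by linarith, by linarith⟩
      rw [h4] at h2; linarith
    have beta : ∀ r : ℝ, 0 ≤ r → r ≤ b → y (T+r) (i+4) = y T (i+4) := by
      intro r h0 h1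
      rcases eq_or_lt_of_le h0 with hr0 | hr0
      · rw [← hr0, add_zero]
      · refine hcomp (i+4) T (T+r) hT (by linarith) ?_
        intro s' hs'
        have h0' : (0:ℝ) ≤ s' - T := by linarith [hs'.1]
        have h1' : s' - T ≤ b := by linarith [hs'.2]
        have h2 := hid2 (s' - T) h0' h1' (i+4)
        rw [show T + (s' - T) = s' by ring] at h2
        have ha := alpha (s' - T) h0' h1'
        rw [show T + (s' - T) = s' by ring] at ha
        rw [ha, (AB_entries i).2.2.1, (AB_entries (i+4)).1, (AB_vve i).2.1] at h2
        have hm : y T (i+4) ≤ y s' (i+4) :=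
          hmono (i+4) (Set.mem_Ici.mpr hT) (Set.mem_Ici.mpr (by linarith [hs'.1]))
            (by linarith [hs'.1])
        rw [h2]
        have hsT : T < s' := hs'.1
        nlinarith [hm, hsT]
    intro r h0 h1
    refine ⟨?_, alpha r h0 h1⟩
    intro j hj
    rcases AB_fin5j i j hj with hje | hje | hje | hje
    · rw [hje]; exact (h3c r h0 h1).1
    · rw [hje]; exact (h3c r h0 h1).2.1
    · rw [hje]; exact (h3c r h0 h1).2.2
    · rw [hje]; exact beta r h0 h1
  -- sSup machinery
  have claim0 : (∀ j, j ≠ i → y (T + 0) j = y T j) ∧ y (T + 0) i = y T i + 0 :=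
    ⟨fun j _ => by rw [add_zero], by rw [add_zero, add_zero]⟩
  set A : Set ℝ := {u | 0 ≤ u ∧ u ≤ 1 ∧ ∀ r : ℝ, 0 ≤ r → r ≤ u →
      (∀ j, j ≠ i → y (T + r) j = y T j) ∧ y (T + r) i = y T i + r} with hA
  have h0A : (0:ℝ) ∈ A := by
    refine ⟨le_refl 0, zero_le_one, fun r h0 h1 => ?_⟩
    have : r = 0 := le_antisymm h1 h0
    rw [this]; exact claim0
  have hAne : A.Nonempty := ⟨0, h0A⟩
  have hbdd : BddAbove A := ⟨1, fun u hu => hu.2.1⟩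
  set u₀ := sSup A with hu₀
  have h0u : 0 ≤ u₀ := le_csSup hbdd h0A
  have hu1 : u₀ ≤ 1 := csSup_le hAne (fun u hu => hu.2.1)
  have hlt : ∀ r : ℝ, 0 ≤ r → r < u₀ →
      (∀ j, j ≠ i → y (T + r) j = y T j) ∧ y (T + r) i = y T i + r := by
    intro r h0 hr
    obtain ⟨a, haA, hra⟩ := exists_lt_of_lt_csSup hAne hr
    exact haA.2.2 r h0 hra.le
  have hclaimu : (∀ j, j ≠ i → y (T + u₀) j = y T j) ∧ y (T + u₀) i = y T i + u₀ := by
    rcases eq_or_lt_of_le h0u with h0' | h0'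
    · rw [← h0']; exact claim0
    · constructor
      · intro j hj
        exact AB_left_lim_eq h0' (AB_tendsto_left hyc T hT u₀ h0' j) tendsto_const_nhds
          (fun r hr => (hlt r hr.1.le hr.2).1 j hj)
      · have hg : Filter.Tendsto (fun u : ℝ => y T i + u) (nhdsWithin u₀ (Set.Iio u₀))
            (nhds (y T i + u₀)) :=
          ((continuous_const.add continuous_id).tendsto u₀).mono_left nhdsWithin_le_nhds
        exact AB_left_lim_eq h0' (AB_tendsto_left hyc T hT u₀ h0' i) hg
          (fun r hr => (hlt r hr.1.le hr.2).2)
  have hu₀A : u₀ ∈ A := by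
    refine ⟨h0u, hu1, fun r h0 hr => ?_⟩
    rcases hr.lt_or_eq with h' | h'
    · exact hlt r h0 h'
    · rw [h']; exact hclaimu
  have hu₀1 : u₀ = 1 := by
    by_contra hne
    have hu₀lt : u₀ < 1 := lt_of_le_of_ne hu1 hne
    have hzu : ∀ j, z (T+u₀) j = vvAB i j - u₀ + AAmat j i * u₀ := by
      intro j
      have h1 := idz u₀ h0u j
      rw [AB_sum5 i j] at h1
      have c := hu₀A.2.2 u₀ h0u (le_refl u₀)
      rw [c.1 (i+1) (AB_ne i).1, c.1 (i+2) (AB_ne i).2.1, c.1 (i+3) (AB_ne i).2.2.1,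
        c.1 (i+4) (AB_ne i).2.2.2, c.2] at h1
      rw [h1]; ring
    have hp1 : 0 < z (T+u₀) (i+1) := by
      rw [hzu, (AB_vve i).2.2.1, (AB_entries i).2.2.2.1]; linarith
    have hp2 : 0 < z (T+u₀) (i+2) := by
      rw [hzu, (AB_vve i).2.2.2.1, (AB_entries i).2.2.2.2.1]; linarith
    have hp3 : 0 < z (T+u₀) (i+3) := by
      rw [hzu, (AB_vve i).2.2.2.2, (AB_entries i).2.2.2.2.2]; linarith
    obtain ⟨ε₁, hε₁, hq1⟩ := AB_pos_extend hzc (T+u₀) (by linarith) (i+1) hp1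
    obtain ⟨ε₂, hε₂, hq2⟩ := AB_pos_extend hzc (T+u₀) (by linarith) (i+2) hp2
    obtain ⟨ε₃, hε₃, hq3⟩ := AB_pos_extend hzc (T+u₀) (by linarith) (i+3) hp3
    set ε := min (min ε₁ ε₂) (min ε₃ ((1-u₀)/2)) with hε
    have hεpos : 0 < ε := by
      apply lt_min (lt_min hε₁ hε₂) (lt_min hε₃ (by linarith))
    have hεle1 : ε ≤ ε₁ := le_trans (min_le_left _ _) (min_le_left _ _)
    have hεle2 : ε ≤ ε₂ := le_trans (min_le_left _ _) (min_le_right _ _)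
    have hεle3 : ε ≤ ε₃ := le_trans (min_le_right _ _) (min_le_left _ _)
    have hεle4 : ε ≤ (1-u₀)/2 := le_trans (min_le_right _ _) (min_le_right _ _)
    set b := u₀ + ε with hb
    have hb1 : b ≤ 1 := by rw [hb]; linarith
    have hext : ∀ (k : Fin 5), k ≠ i →
        (∀ s ∈ Set.Icc (T+u₀) (T+u₀+ε), 0 < z s k) →
        ∀ r : ℝ, 0 ≤ r → r ≤ b → y (T+r) k = y T k := by
      intro k hk hq r h0 h1
      rcases le_or_gt r u₀ with h' | h'
      · exact (hu₀A.2.2 r h0 h').1 k hk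
      · have e1 : y (T+r) k = y (T+u₀) k := by
          refine hcomp k (T+u₀) (T+r) (by linarith) (by linarith) ?_
          intro s hs
          exact hq s ⟨hs.1.le, by rw [hb] at h1; linarith [hs.2]⟩
        rw [e1]
        exact (hu₀A.2.2 u₀ h0u (le_refl u₀)).1 k hk
    have h3c : ∀ r : ℝ, 0 ≤ r → r ≤ b →
        y (T+r) (i+1) = y T (i+1) ∧ y (T+r) (i+2) = y T (i+2) ∧ y (T+r) (i+3) = y T (i+3) := by
      intro r h0 h1
      refine ⟨hext (i+1) (AB_ne i).1 (fun s hs => hq1 s ⟨hs.1, by linarith [hs.2]⟩) r h0 h1,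
        hext (i+2) (AB_ne i).2.1 (fun s hs => hq2 s ⟨hs.1, by linarith [hs.2]⟩) r h0 h1,
        hext (i+3) (AB_ne i).2.2.1 (fun s hs => hq3 s ⟨hs.1, by linarith [hs.2]⟩) r h0 h1⟩
    have hbA : b ∈ A := ⟨by linarith, hb1, main b (by linarith) hb1 h3c⟩
    have : b ≤ u₀ := le_csSup hbdd hbA
    rw [hb] at this; linarith
  intro u hu
  exact hu₀A.2.2 u hu.1 (by rw [hu₀1]; exact hu.2)
-- continuation: step_z, key induction, final theorem pieces
lemma AB_step_z {y z : ℝ → Fin 5 → ℝ}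
    (h : IsSkorokhodSolution AAmat (fun t k => (![0, 1, 1, 1, 0] : Fin 5 → ℝ) k - t) y z)
    (T : ℝ) (hT : 0 ≤ T) (i : Fin 5) (hzT : z T = vvAB i) :
    ∀ u ∈ Set.Icc (0:ℝ) 1, z (T+u) = fun j => vvAB i j + u * (AAmat j i - 1) := by
  intro u hu
  funext j
  have h1 := AB_idz h T hT i hzT u hu.1 j
  rw [AB_sum5 i j] at h1
  obtain ⟨hc1, hc2⟩ := AB_step h T hT i hzT u hu
  rw [hc1 (i+1) (AB_ne i).1, hc1 (i+2) (AB_ne i).2.1, hc1 (i+3) (AB_ne i).2.2.1,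
    hc1 (i+4) (AB_ne i).2.2.2, hc2] at h1
  rw [h1]; ring

lemma AB_key {y z : ℝ → Fin 5 → ℝ}
    (h : IsSkorokhodSolution AAmat (fun t k => (![0, 1, 1, 1, 0] : Fin 5 → ℝ) k - t) y z) :
    ∀ n : ℕ, z (n:ℝ) = vvAB ((n : Fin 5)) := by
  intro n
  induction n with
  | zero =>
    obtain ⟨hyc, hzc, hzx, hzn, hy0, hmono, hcomp⟩ := h
    have h0 := hzx 0 le_rfl
    rw [hy0] at h0
    simp only [Matrix.mulVec_zero] at h0
    rw [Nat.cast_zero, h0, show ((0:ℕ) : Fin 5) = 0 from rfl, AB_vv0]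
    funext j
    simp
  | succ n ih =>
    have hz := AB_step_z h (n:ℝ) (Nat.cast_nonneg n) ((n : Fin 5)) ih 1
      ⟨zero_le_one, le_refl 1⟩
    have hc1 : ((n:ℝ) + 1) = (((n+1 : ℕ)):ℝ) := by push_cast; ring
    have hc2 : (((n+1 : ℕ)) : Fin 5) = ((n : Fin 5)) + 1 := by push_cast; ring
    rw [hc1] at hz
    rw [hz, hc2]
    funext j
    exact AB_vstep ((n : Fin 5)) j

lemma AB_cast5 (t k : ℕ) : (((5*t+k : ℕ)) : Fin 5) = ((k : Fin 5)) := by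
  apply Fin.ext
  simp only [Fin.val_natCast]
  omega

example (t : ℕ) (i : ℕ) (h1 : 1 ≤ i) (h4 : i ≤ 4) (j : Fin 5) :
    vvAB ((i : Fin 5)) j = if j.val = i - 1 ∨ j.val = i then 0 else 1 := by
  interval_cases i <;> fin_cases j <;>
    simp (config := { decide := true }) [vvAB]

/-- Dynamics of the A-block: for the matrix `AA` and input
`x(t) = (0,1,1,1,0) − (1,…,1) t`, every Skorokhod solution is periodic with
period 5, cycling through the indicated vectors at integer times, with `y_{i+1}`
the unique active (at unit rate) variable on `(5t+i, 5t+i+1)`. -/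
theorem A_block_dynamics (y z : ℝ → Fin 5 → ℝ)
    (h : IsSkorokhodSolution AAmat
      (fun t k => (![0, 1, 1, 1, 0] : Fin 5 → ℝ) k - t) y z) :
    ∀ t : ℕ,
      (z (5 * (t : ℝ)) = ![0, 1, 1, 1, 0]) ∧
      (∀ i : ℕ, 1 ≤ i → i ≤ 4 → ∀ j : Fin 5,
        z (5 * (t : ℝ) + (i : ℝ)) j =
          if j.val = i - 1 ∨ j.val = i then 0 else 1) ∧
      (∀ i : Fin 5,
        UnitActive (fun s => y s i) (5 * (t : ℝ) + (i.val : ℝ))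
          (5 * (t : ℝ) + (i.val : ℝ) + 1) ∧
        ∀ j : Fin 5, j ≠ i →
          Passive (fun s => y s i) (5 * (t : ℝ) + (j.val : ℝ))
            (5 * (t : ℝ) + (j.val : ℝ) + 1)) := by
  intro t
  have hkey := AB_key h
  have hz5 : ∀ k : Fin 5, z (5*(t:ℝ)+(k.val:ℝ)) = vvAB k := by
    intro k
    have hk := hkey (5*t + k.val)
    rw [show (((5*t+k.val : ℕ)):ℝ) = 5*(t:ℝ) + (k.val:ℝ) by push_cast; ring] at hk
    rw [hk, AB_cast5 t k.val, Fin.cast_val_eq_self]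
  refine ⟨?_, ?_, ?_⟩
  · have h0 := hkey (5*t)
    rw [show (((5*t : ℕ)):ℝ) = 5*(t:ℝ) by push_cast; ring] at h0
    rw [h0, show (((5*t : ℕ)) : Fin 5) = 0 by simpa using AB_cast5 t 0, AB_vv0]
  · intro i h1 h4 j
    have hk := hkey (5*t + i)
    rw [show (((5*t+i : ℕ)):ℝ) = 5*(t:ℝ) + (i:ℝ) by push_cast; ring] at hk
    rw [hk, AB_cast5 t i]
    interval_cases i <;> fin_cases j <;> simp (config := { decide := true }) [vvAB]
  · intro i
    have hT : (0:ℝ) ≤ 5*(t:ℝ) + (i.val:ℝ) := by positivity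
    constructor
    · intro s hs
      have hstep := (AB_step h _ hT i (hz5 i) (s - (5*(t:ℝ) + (i.val:ℝ)))
        ⟨by linarith [hs.1], by linarith [hs.2]⟩).2
      rw [show (5*(t:ℝ) + (i.val:ℝ)) + (s - (5*(t:ℝ) + (i.val:ℝ))) = s by ring] at hstep
      show y s i - y (5*(t:ℝ) + (i.val:ℝ)) i = 1 * (s - (5*(t:ℝ) + (i.val:ℝ)))
      rw [hstep]
      ring
    · intro j hj s hs
      have hT' : (0:ℝ) ≤ 5*(t:ℝ) + (j.val:ℝ) := by positivity
      have hstep := (AB_step h _ hT' j (hz5 j) (s - (5*(t:ℝ) + (j.val:ℝ)))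
        ⟨by linarith [hs.1], by linarith [hs.2]⟩).1 i (Ne.symm hj)
      rw [show (5*(t:ℝ) + (j.val:ℝ)) + (s - (5*(t:ℝ) + (j.val:ℝ))) = s by ring] at hstep
      show y s i = y (5*(t:ℝ) + (j.val:ℝ)) i
      exact hstep
end ABaux
end
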